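/- arXiv:2603.06831 — 5 statements merged into one kernel-verified Lean document; each statement's English description precedes it below -/
import Mathlib

section
/- Fix v̄ > 0 and ε > 0, and let λ* ≥ 1 be the unique solution of (1/2)(λ − 1 − log λ) = ε with λ ≥ 1. Then the set of variances v ≥ v̄ such that the KL divergence of N(μ, v) with respect to N(μ, v̄) is at most ε equals the interval [v̄, λ* v̄]; hence among all Gaussian measures N(μ, v) with v ≥ v̄ satisfying the KL trust-region constraint D_KL(N(μ, v) ‖ N(μ, v̄)) ≤ ε, the maximal variance (equivalently, the maximal-entropy member) is attained exactly at v = λ* v̄. -/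
open MeasureTheory ProbabilityTheory Real

open scoped Classical in
/-- The Kullback–Leibler divergence of `p` with respect to `q`, valued in `EReal`:
it is `∫ log (dp/dq) dp` when `p ≪ q` and this integral exists, and `+∞` otherwise. -/
noncomputable def klDiv {α : Type*} [MeasurableSpace α] (p q : Measure α) : EReal :=
  if p ≪ q ∧ Integrable (llr p q) p then ((∫ x, llr p q x ∂p : ℝ) : EReal) else ⊤

open Filter in
open scoped NNReal ENNReal in
lemma aux_integral_sq_mul_exp_neg_mul_sq {b : ℝ} (hb : 0 < b) :
    ∫ x : ℝ, x ^ 2 * rexp (-b * x ^ 2) = Real.sqrt (π / b) / (2 * b) := by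
  have hb' : (2 * b) ≠ 0 := by positivity
  have hI2 : Integrable fun x : ℝ => x ^ 2 * rexp (-b * x ^ 2) := by
    have := integrable_rpow_mul_exp_neg_mul_sq hb (s := 2) (by norm_num)
    simpa [Real.rpow_natCast] using this
  have hIe : Integrable fun x : ℝ => rexp (-b * x ^ 2) := integrable_exp_neg_mul_sq hb
  set f : ℝ → ℝ := fun x => -(2 * b)⁻¹ * (x * rexp (-b * x ^ 2)) with hf
  have hderiv : ∀ x : ℝ, HasDerivAt f
      (x ^ 2 * rexp (-b * x ^ 2) - (2 * b)⁻¹ * rexp (-b * x ^ 2)) x := by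
    intro x
    have h1 : HasDerivAt (fun x : ℝ => rexp (-b * x ^ 2))
        (rexp (-b * x ^ 2) * (-b * (2 * x ^ 1))) x :=
      (((hasDerivAt_pow 2 x).const_mul (-b)).exp).congr_deriv (by push_cast; ring)
    have h2 := ((hasDerivAt_id x).mul h1).const_mul (-(2 * b)⁻¹)
    refine h2.congr_deriv ?_
    simp only [id_eq]
    field_simp
    ring
  have h1 : Tendsto (fun x : ℝ => x * rexp (-b * x ^ 2)) atTop (nhds 0) := by
    have h0 : (fun x : ℝ => x * rexp (-b * x ^ 2)) =o[atTop] fun x : ℝ => rexp (-(1/2) * x) := by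
      have := rpow_mul_exp_neg_mul_sq_isLittleO_exp_neg hb 1
      simpa [Real.rpow_one] using this
    refine h0.trans_tendsto ?_
    have hl : Tendsto (fun x : ℝ => -(1/2 : ℝ) * x) atTop atBot :=
      (tendsto_const_mul_atBot_of_neg (by norm_num)).mpr tendsto_id
    exact tendsto_exp_atBot.comp hl
  have htop : Tendsto f atTop (nhds 0) := by
    have h2 := h1.const_mul (-(2 * b)⁻¹)
    rw [mul_zero] at h2
    exact h2
  have hbot : Tendsto f atBot (nhds 0) := by
    have h4 : Tendsto (fun x : ℝ => f (-x)) atTop (nhds 0) := by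
      have h2 := h1.const_mul ((2 * b)⁻¹)
      rw [mul_zero] at h2
      refine h2.congr fun x => ?_
      simp only [hf]
      ring
    have h5 := h4.comp tendsto_neg_atBot_atTop
    refine h5.congr fun x => ?_
    simp [Function.comp]
  have key := integral_of_hasDerivAt_of_tendsto hderiv (hI2.sub (hIe.const_mul _)) hbot htop
  have hsub := integral_sub hI2 (hIe.const_mul ((2 * b)⁻¹))
  rw [key] at hsub
  have hmain : ∫ x : ℝ, x ^ 2 * rexp (-b * x ^ 2) = (2 * b)⁻¹ * ∫ x : ℝ, rexp (-b * x ^ 2) := by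
    rw [integral_const_mul] at hsub
    linarith [hsub]
  rw [hmain, integral_gaussian]
  field_simp

open scoped NNReal ENNReal in
lemma aux_gaussianReal_eq_withDensity (m : ℝ) {v : ℝ≥0} (hv : v ≠ 0) :
    gaussianReal m v
      = (volume : Measure ℝ).withDensity
        (fun x => ((gaussianPDFReal m v x).toNNReal : ℝ≥0∞)) := by
  rw [gaussianReal_of_var_ne_zero _ hv]
  rfl

open Filter in
open scoped NNReal ENNReal in
lemma aux_integral_gaussianReal (m : ℝ) {v : ℝ≥0} (hv : v ≠ 0) (g : ℝ → ℝ) :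
    ∫ x, g x ∂(gaussianReal m v) = ∫ x, gaussianPDFReal m v x * g x := by
  rw [aux_gaussianReal_eq_withDensity m hv,
    integral_withDensity_eq_integral_smul
      ((measurable_gaussianPDFReal m v).real_toNNReal) g]
  refine integral_congr_ae (Filter.Eventually.of_forall fun x => ?_)
  simp [NNReal.smul_def, Real.coe_toNNReal _ (gaussianPDFReal_nonneg m v x)]

open Filter in
open scoped NNReal ENNReal in
lemma aux_integrable_gaussianReal_iff (m : ℝ) {v : ℝ≥0} (hv : v ≠ 0) (g : ℝ → ℝ) :
    Integrable g (gaussianReal m v)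
      ↔ Integrable (fun x => gaussianPDFReal m v x * g x) volume := by
  rw [aux_gaussianReal_eq_withDensity m hv,
    integrable_withDensity_iff_integrable_smul ((measurable_gaussianPDFReal m v).real_toNNReal)]
  refine integrable_congr (Filter.Eventually.of_forall fun x => ?_)
  simp [NNReal.smul_def, Real.coe_toNNReal _ (gaussianPDFReal_nonneg m v x)]

open Filter in
open scoped NNReal ENNReal in
lemma aux_integral_sq_pdf (m : ℝ) {v : ℝ≥0} (hv : v ≠ 0) :
    ∫ x : ℝ, gaussianPDFReal m v x * (x - m) ^ 2 = (v : ℝ) := by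
  have hv' : (0 : ℝ) < v := lt_of_le_of_ne v.coe_nonneg (by exact_mod_cast (Ne.symm hv))
  have hb : (0 : ℝ) < (2 * (v:ℝ))⁻¹ := by positivity
  calc ∫ x : ℝ, gaussianPDFReal m v x * (x - m) ^ 2
      = ∫ x : ℝ, (√(2 * π * v))⁻¹ * ((x - m) ^ 2 * rexp (-(2 * (v:ℝ))⁻¹ * (x - m) ^ 2)) := by
        refine integral_congr_ae (Filter.Eventually.of_forall fun x => ?_)
        simp only [gaussianPDFReal_def]
        ring_nf
    _ = (√(2 * π * v))⁻¹ * ∫ x : ℝ, (x - m) ^ 2 * rexp (-(2 * (v:ℝ))⁻¹ * (x - m) ^ 2) := by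
        rw [integral_const_mul]
    _ = (√(2 * π * v))⁻¹ * ∫ x : ℝ, x ^ 2 * rexp (-(2 * (v:ℝ))⁻¹ * x ^ 2) := by
        rw [integral_sub_right_eq_self (fun x => x ^ 2 * rexp (-(2 * (v:ℝ))⁻¹ * x ^ 2)) m]
    _ = (v : ℝ) := by
        rw [aux_integral_sq_mul_exp_neg_mul_sq hb]
        rw [show π / (2 * (v:ℝ))⁻¹ = 2 * π * v by field_simp]
        rw [show (2 * (2 * (v:ℝ))⁻¹) = (v:ℝ)⁻¹ by field_simp]
        have h2 : (0:ℝ) < √(2 * π * v) := Real.sqrt_pos.mpr (by positivity)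
        field_simp

open Filter in
open scoped NNReal ENNReal in
lemma aux_klDiv_gaussianReal_eq (m : ℝ) {v w : ℝ} (hv : 0 < v) (hw : 0 < w) :
    klDiv (gaussianReal m v.toNNReal) (gaussianReal m w.toNNReal)
      = (((v / w - 1 - Real.log (v / w)) / 2 : ℝ) : EReal) := by
  set v' := v.toNNReal with hv'def
  set w' := w.toNNReal with hw'def
  have hv' : v' ≠ 0 := by simp [hv'def, Real.toNNReal_eq_zero, not_le, hv]
  have hw' : w' ≠ 0 := by simp [hw'def, Real.toNNReal_eq_zero, not_le, hw]
  have hvc : (v' : ℝ) = v := Real.coe_toNNReal v hv.le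
  have hwc : (w' : ℝ) = w := Real.coe_toNNReal w hw.le
  set p := gaussianReal m v' with hp
  set q := gaussianReal m w' with hq
  have hpvol : p ≪ (volume : Measure ℝ) := gaussianReal_absolutelyContinuous m hv'
  have hpq : p ≪ q := hpvol.trans (gaussianReal_absolutelyContinuous' m hw')
  have hrn : p.rnDeriv q =ᵐ[volume]
      fun x => (gaussianPDF m w' x)⁻¹ * gaussianPDF m v' x := by
    have h1 : p.rnDeriv (volume.withDensity (gaussianPDF m w')) =ᵐ[volume]
        fun x => (gaussianPDF m w' x)⁻¹ * p.rnDeriv volume x :=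
      Measure.rnDeriv_withDensity_right_of_absolutelyContinuous hpvol
        (measurable_gaussianPDF m w').aemeasurable
        (Eventually.of_forall fun x => (gaussianPDF_pos m hw' x).ne')
        (Eventually.of_forall fun x => ENNReal.ofReal_ne_top)
    have h2 : p.rnDeriv volume =ᵐ[volume] gaussianPDF m v' := rnDeriv_gaussianReal m v'
    rw [hq, gaussianReal_of_var_ne_zero m hw']
    filter_upwards [h1, h2] with x hx1 hx2
    rw [hx1, hx2]
  set A : ℝ := (2 * w)⁻¹ - (2 * v)⁻¹ with hA
  set C : ℝ := Real.log (√(2 * π * w)) - Real.log (√(2 * π * v)) with hC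
  have hllr : llr p q =ᵐ[p] fun x => A * (x - m) ^ 2 + C := by
    filter_upwards [hpvol.ae_le hrn] with x hx
    rw [llr, hx]
    have hpw : 0 < gaussianPDFReal m w' x := gaussianPDFReal_pos m w' x hw'
    have hpv : 0 < gaussianPDFReal m v' x := gaussianPDFReal_pos m v' x hv'
    rw [gaussianPDF, gaussianPDF, ← ENNReal.ofReal_inv_of_pos hpw,
      ← ENNReal.ofReal_mul (by positivity), ENNReal.toReal_ofReal (by positivity),
      Real.log_mul (by positivity) hpv.ne', Real.log_inv]
    simp only [gaussianPDFReal_def]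
    have h2v : (0:ℝ) < 2 * π * v := by positivity
    have h2w : (0:ℝ) < 2 * π * w := by positivity
    rw [Real.log_mul (by positivity) (Real.exp_ne_zero _),
      Real.log_mul (by positivity) (Real.exp_ne_zero _),
      Real.log_inv, Real.log_inv, Real.log_exp, Real.log_exp, hvc, hwc]
    rw [hA, hC]
    field_simp
    ring
  have hbase : Integrable (fun x : ℝ => x ^ 2 * rexp (-(2 * v)⁻¹ * x ^ 2)) := by
    have := integrable_rpow_mul_exp_neg_mul_sq (b := (2*v)⁻¹) (by positivity) (s := 2)
      (by norm_num)
    simpa [Real.rpow_natCast] using this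
  have hsq : Integrable (fun x => (x - m) ^ 2) p := by
    rw [hp, aux_integrable_gaussianReal_iff m hv']
    have h3 := (hbase.comp_sub_right m).const_mul (√(2 * π * v))⁻¹
    refine h3.congr (Eventually.of_forall fun x => ?_)
    simp only [gaussianPDFReal_def, hvc]
    ring_nf
  have hInt : Integrable (llr p q) p :=
    (((hsq.const_mul A).add (integrable_const C)).congr hllr.symm)
  have hval : ∫ x, llr p q x ∂p = (v / w - 1 - Real.log (v / w)) / 2 := by
    rw [integral_congr_ae hllr, integral_add (hsq.const_mul A) (integrable_const C),
      integral_const_mul]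
    have : ∫ x, (x - m) ^ 2 ∂p = v := by
      rw [hp, aux_integral_gaussianReal m hv', aux_integral_sq_pdf m hv', hvc]
    rw [this]
    simp only [integral_const, measure_univ, probReal_univ, ENNReal.toReal_one, smul_eq_mul, one_mul]
    rw [hA, hC, Real.log_sqrt (by positivity), Real.log_sqrt (by positivity),
      Real.log_mul (by positivity) hw.ne', Real.log_mul (by positivity) hv.ne',
      Real.log_div hv.ne' hw.ne']
    field_simp
    ring
  rw [klDiv, if_pos ⟨hpq, hInt⟩, hval]

lemma aux_strictMonoOn_g : StrictMonoOn (fun t : ℝ => t - 1 - Real.log t) (Set.Ici 1) := by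
  apply strictMonoOn_of_deriv_pos (convex_Ici 1)
  · refine ((continuousOn_id.sub continuousOn_const).sub
      (Real.continuousOn_log.mono ?_))
    intro x hx
    exact ne_of_gt (lt_of_lt_of_le zero_lt_one hx)
  · intro t ht
    rw [interior_Ici] at ht
    have ht1 : (1:ℝ) < t := ht
    have ht0 : t ≠ 0 := by positivity
    have hd : HasDerivAt (fun t : ℝ => t - 1 - Real.log t) (1 - t⁻¹) t :=
      ((hasDerivAt_id t).sub_const 1).sub (Real.hasDerivAt_log ht0)
    rw [hd.deriv]
    have : t⁻¹ < 1 := inv_lt_one_of_one_lt₀ ht1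
    linarith

/-- Given a nominal variance `v̄ > 0` and a KL budget `ε > 0`, with `λ* ≥ 1` the unique root of
`(1/2)(λ - 1 - log λ) = ε`, the set of variances `v ≥ v̄` for which
`D_KL(N(μ, v) ‖ N(μ, v̄)) ≤ ε` is exactly the interval `[v̄, λ* v̄]`; hence the maximal variance
(the maximal-entropy Gaussian) within the KL trust region is attained exactly at `v = λ* v̄`. -/
theorem maxent_trust_region_gaussian (μ vbar ε lstar : ℝ) (hvbar : 0 < vbar) (hε : 0 < ε)
    (hlstar : 1 ≤ lstar) (hroot : (1 / 2 : ℝ) * (lstar - 1 - Real.log lstar) = ε) :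
    {v : ℝ | vbar ≤ v ∧
        klDiv (gaussianReal μ v.toNNReal) (gaussianReal μ vbar.toNNReal) ≤ (ε : EReal)}
      = Set.Icc vbar (lstar * vbar) ∧
    IsGreatest {v : ℝ | vbar ≤ v ∧
        klDiv (gaussianReal μ v.toNNReal) (gaussianReal μ vbar.toNNReal) ≤ (ε : EReal)}
      (lstar * vbar) := by
  have hiff : ∀ v : ℝ,
      (vbar ≤ v ∧
        klDiv (gaussianReal μ v.toNNReal) (gaussianReal μ vbar.toNNReal) ≤ (ε : EReal))
      ↔ (vbar ≤ v ∧ v ≤ lstar * vbar) := by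
    intro v
    constructor
    · rintro ⟨hvb, hkl⟩
      refine ⟨hvb, ?_⟩
      have hv0 : 0 < v := lt_of_lt_of_le hvbar hvb
      rw [aux_klDiv_gaussianReal_eq μ hv0 hvbar, EReal.coe_le_coe_iff] at hkl
      have hlam : 1 ≤ v / vbar := (one_le_div hvbar).mpr hvb
      have hg : (v / vbar - 1 - Real.log (v / vbar)) ≤ (lstar - 1 - Real.log lstar) := by
        rw [← hroot] at hkl; linarith
      have hle : v / vbar ≤ lstar := by
        by_contra hlt
        push_neg at hlt
        have := aux_strictMonoOn_g hlstar (le_trans hlstar hlt.le) hlt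
        simp only at this
        linarith
      calc v = (v / vbar) * vbar := by field_simp
        _ ≤ lstar * vbar := by nlinarith
    · rintro ⟨hvb, hub⟩
      refine ⟨hvb, ?_⟩
      have hv0 : 0 < v := lt_of_lt_of_le hvbar hvb
      rw [aux_klDiv_gaussianReal_eq μ hv0 hvbar, EReal.coe_le_coe_iff]
      have hlam : 1 ≤ v / vbar := (one_le_div hvbar).mpr hvb
      have hle : v / vbar ≤ lstar := (div_le_iff₀ hvbar).mpr hub
      have hg : (v / vbar - 1 - Real.log (v / vbar)) ≤ (lstar - 1 - Real.log lstar) := by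
        rcases eq_or_lt_of_le hle with h | h
        · rw [h]
        · have := aux_strictMonoOn_g hlam hlstar h
          simp only at this
          linarith
      rw [← hroot]
      linarith
  have hset : {v : ℝ | vbar ≤ v ∧
        klDiv (gaussianReal μ v.toNNReal) (gaussianReal μ vbar.toNNReal) ≤ (ε : EReal)}
      = Set.Icc vbar (lstar * vbar) := by
    ext v
    simpa [Set.mem_Icc] using hiff v
  refine ⟨hset, ?_, ?_⟩
  · exact (hiff _).mpr ⟨le_mul_of_one_le_left hvbar.le hlstar, le_refl _⟩
  · intro x hx
    exact ((hiff x).mp hx).2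
end

section
/- Let X be a measurable space, let κ, κ̄ be Markov kernels from X to a measurable space Y with D_KL(κ(x) ‖ κ̄(x)) ≤ η_dyn(x) for all x, let σ > 0, let ℓ : X → ℝ be measurable, and let δc : X → ℝ be measurable with |δc(x)| ≤ Δ(x) for all x. Then for every x ∈ X, the augmented kernel κ(x) ⊗ N(ℓ(x) + δc(x), σ²) satisfies D_KL(κ(x) ⊗ N(ℓ(x) + δc(x), σ²) ‖ κ̄(x) ⊗ N(ℓ(x), σ²)) ≤ η_dyn(x) + Δ(x)²/(2σ²). -/
open MeasureTheory ProbabilityTheory Real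
open scoped NNReal ENNReal

section AuxGauss
-- (contents of g.lean and g2.lean pasted below)

lemma integrable_id_gaussianReal0 {v : ℝ≥0} (hv : v ≠ 0) :
    Integrable (fun y : ℝ => y) (gaussianReal 0 v) := by
  have hvpos : (0:ℝ) < (v:ℝ) := by
    exact_mod_cast pos_iff_ne_zero.mpr hv
  rw [gaussianReal_of_var_ne_zero _ hv]
  rw [integrable_withDensity_iff (measurable_gaussianPDF _ _)
    (ae_of_all _ fun x => ENNReal.ofReal_lt_top)]
  have : (fun x : ℝ => x * ((gaussianPDF 0 v x).toReal))
      = fun x : ℝ => (√(2 * π * v))⁻¹ * (x ^ (1:ℝ) * rexp (-(2*(v:ℝ))⁻¹ * x ^ 2)) := by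
    funext x
    rw [gaussianPDF, ENNReal.toReal_ofReal (gaussianPDFReal_nonneg _ _ _), gaussianPDFReal]
    rw [Real.rpow_one]
    ring_nf
  rw [this]
  exact (integrable_rpow_mul_exp_neg_mul_sq (by positivity) (by norm_num)).const_mul _

lemma integrable_id_gaussianReal (m : ℝ) {v : ℝ≥0} (hv : v ≠ 0) :
    Integrable (fun y : ℝ => y) (gaussianReal m v) := by
  have h := gaussianReal_map_add_const (μ := 0) (v := v) m
  rw [zero_add] at h
  rw [← h, integrable_map_measure (f := fun x : ℝ => x + m) (g := fun y : ℝ => y)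
    measurable_id.aestronglyMeasurable (by fun_prop)]
  simp only [Function.comp_def]
  exact (integrable_id_gaussianReal0 hv).add (integrable_const m)

lemma integral_id_gaussianReal (m : ℝ) {v : ℝ≥0} (hv : v ≠ 0) :
    ∫ y, y ∂(gaussianReal m v) = m := by
  have hmap : (gaussianReal m v).map (fun y => 2 * m - y) = gaussianReal m v := by
    have h1 : (gaussianReal m v).map ((-1 : ℝ) * ·) =
        gaussianReal (-m) v := by
      rw [gaussianReal_map_const_mul (-1 : ℝ)]
      congr 1
      · ring
      · rw [show NNReal.mk ((-1:ℝ)^2) (sq_nonneg _) = 1 by ext; norm_num, one_mul]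
    have h2 : (gaussianReal (-m) v).map (· + 2*m) = gaussianReal m v := by
      rw [gaussianReal_map_add_const]; congr 1; ring
    calc (gaussianReal m v).map (fun y => 2 * m - y)
        = ((gaussianReal m v).map ((-1 : ℝ) * ·)).map (· + 2*m) := by
          rw [Measure.map_map (by fun_prop) (by fun_prop)]
          congr 1; funext y; simp; ring
      _ = gaussianReal m v := by rw [h1, h2]
  have hint := integrable_id_gaussianReal m hv
  have : ∫ y, y ∂(gaussianReal m v) = ∫ y, (2*m - y) ∂(gaussianReal m v) := by
    conv_lhs => rw [← hmap]
    rw [integral_map (φ := fun y : ℝ => 2 * m - y) (f := fun y : ℝ => y) (by fun_prop)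
      measurable_id.aestronglyMeasurable]
  have h3 : ∫ y, (2*m - y) ∂(gaussianReal m v) = 2*m - ∫ y, y ∂(gaussianReal m v) := by
    rw [integral_sub (integrable_const _) hint, integral_const]
    simp
  linarith [this, h3]

lemma gaussian_withDensity (m δ : ℝ) {v : ℝ≥0} (hv : v ≠ 0) :
    gaussianReal (m + δ) v = (gaussianReal m v).withDensity
      (fun y => ENNReal.ofReal (gaussianPDFReal (m + δ) v y / gaussianPDFReal m v y)) := by
  rw [gaussianReal_of_var_ne_zero _ hv, gaussianReal_of_var_ne_zero _ hv,
    ← withDensity_mul _ (measurable_gaussianPDF _ _)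
      (g := fun y => ENNReal.ofReal (gaussianPDFReal (m + δ) v y / gaussianPDFReal m v y))
      (((measurable_gaussianPDFReal _ _).div (measurable_gaussianPDFReal _ _)).ennreal_ofReal)]
  congr 1
  funext y
  simp only [Pi.mul_apply, gaussianPDF]
  rw [← ENNReal.ofReal_mul (gaussianPDFReal_nonneg _ _ _),
    mul_div_cancel₀ _ (gaussianPDFReal_pos m v y hv).ne']

lemma llr_gaussian_ae (m δ : ℝ) {v : ℝ≥0} (hv : v ≠ 0) :
    llr (gaussianReal (m + δ) v) (gaussianReal m v)
      =ᵐ[gaussianReal m v]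
      fun y => (2 * δ * (y - m) - δ ^ 2) / (2 * (v : ℝ)) := by
  have h := Measure.rnDeriv_withDensity (gaussianReal m v)
    (f := fun y => ENNReal.ofReal (gaussianPDFReal (m + δ) v y / gaussianPDFReal m v y))
    (((measurable_gaussianPDFReal (m+δ) v).div (measurable_gaussianPDFReal m v)).ennreal_ofReal)
  rw [← gaussian_withDensity m δ hv] at h
  filter_upwards [h] with y hy
  have hvpos : (0:ℝ) < (v:ℝ) := by exact_mod_cast pos_iff_ne_zero.mpr hv
  rw [llr, hy, ENNReal.toReal_ofReal
    (div_nonneg (gaussianPDFReal_nonneg _ _ _) (gaussianPDFReal_nonneg _ _ _))]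
  rw [gaussianPDFReal, gaussianPDFReal, mul_div_mul_left _ _
    (by positivity : (√(2 * π * v))⁻¹ ≠ 0), ← Real.exp_sub, Real.log_exp]
  field_simp
  ring
end AuxGauss

section AuxProd
set_option linter.unusedSectionVars false
variable {α β : Type*} [MeasurableSpace α] [MeasurableSpace β]
  {p q : Measure α} {p' q' : Measure β}
  [IsProbabilityMeasure p] [IsProbabilityMeasure q]
  [IsProbabilityMeasure p'] [IsProbabilityMeasure q']

lemma prod_eq_withDensity_rnDeriv (hpq : p ≪ q) (hp'q' : p' ≪ q') :
    p.prod p' = (q.prod q').withDensity (fun z => p.rnDeriv q z.1 * p'.rnDeriv q' z.2) :=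
  Measure.prod_eq fun s t hs ht => by
    rw [withDensity_apply _ (hs.prod ht), ← Measure.prod_restrict,
      lintegral_prod_mul (Measure.measurable_rnDeriv p q).aemeasurable
        (Measure.measurable_rnDeriv p' q').aemeasurable,
      Measure.setLIntegral_rnDeriv hpq, Measure.setLIntegral_rnDeriv hp'q']

lemma rnDeriv_prod_ae (hpq : p ≪ q) (hp'q' : p' ≪ q') :
    (p.prod p').rnDeriv (q.prod q')
      =ᵐ[q.prod q'] fun z => p.rnDeriv q z.1 * p'.rnDeriv q' z.2 := by
  have h := Measure.rnDeriv_withDensity (q.prod q')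
    (f := fun z : α × β => p.rnDeriv q z.1 * p'.rnDeriv q' z.2)
    (((Measure.measurable_rnDeriv p q).comp measurable_fst).mul
      ((Measure.measurable_rnDeriv p' q').comp measurable_snd))
  rwa [← prod_eq_withDensity_rnDeriv hpq hp'q'] at h

lemma llr_prod_ae (hpq : p ≪ q) (hp'q' : p' ≪ q') :
    llr (p.prod p') (q.prod q')
      =ᵐ[p.prod p'] fun z => llr p q z.1 + llr p' q' z.2 := by
  have hac := hpq.prod hp'q'
  have h1 : (p.prod p').rnDeriv (q.prod q')
      =ᵐ[p.prod p'] fun z => p.rnDeriv q z.1 * p'.rnDeriv q' z.2 :=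
    hac.ae_eq (rnDeriv_prod_ae hpq hp'q')
  have hpos1 : ∀ᵐ z ∂(p.prod p'), 0 < p.rnDeriv q z.1 :=
    Measure.quasiMeasurePreserving_fst.ae (Measure.rnDeriv_pos hpq)
  have hlt1 : ∀ᵐ z ∂(p.prod p'), p.rnDeriv q z.1 < ∞ :=
    Measure.quasiMeasurePreserving_fst.ae (hpq.ae_le (Measure.rnDeriv_lt_top p q))
  have hpos2 : ∀ᵐ z ∂(p.prod p'), 0 < p'.rnDeriv q' z.2 :=
    Measure.quasiMeasurePreserving_snd.ae (Measure.rnDeriv_pos hp'q')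
  have hlt2 : ∀ᵐ z ∂(p.prod p'), p'.rnDeriv q' z.2 < ∞ :=
    Measure.quasiMeasurePreserving_snd.ae (hp'q'.ae_le (Measure.rnDeriv_lt_top p' q'))
  filter_upwards [h1, hpos1, hlt1, hpos2, hlt2] with z hz h1p h1t h2p h2t
  rw [llr, hz, ENNReal.toReal_mul, Real.log_mul (ENNReal.toReal_pos h1p.ne' h1t.ne).ne'
    (ENNReal.toReal_pos h2p.ne' h2t.ne).ne', llr, llr]

lemma integrable_comp_fst_prod {f : α → ℝ} (hf : Measurable f) (hint : Integrable f p) :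
    Integrable (fun z : α × β => f z.1) (p.prod p') := by
  have hmap : Measure.map Prod.fst (p.prod p') = p := by simp
  have := (integrable_map_measure (f := (Prod.fst : α × β → α)) (g := f)
    (by rw [hmap]; exact hf.aestronglyMeasurable) measurable_fst.aemeasurable)
  rw [hmap] at this
  exact this.mp hint

lemma integrable_comp_snd_prod {f : β → ℝ} (hf : Measurable f) (hint : Integrable f p') :
    Integrable (fun z : α × β => f z.2) (p.prod p') := by
  have hmap : Measure.map Prod.snd (p.prod p') = p' := by simp
  have := (integrable_map_measure (f := (Prod.snd : α × β → β)) (g := f)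
    (by rw [hmap]; exact hf.aestronglyMeasurable) measurable_snd.aemeasurable)
  rw [hmap] at this
  exact this.mp hint

lemma integral_comp_fst_prod {f : α → ℝ} (hf : Measurable f) :
    ∫ z, f z.1 ∂(p.prod p') = ∫ y, f y ∂p := by
  have hmap : Measure.map Prod.fst (p.prod p') = p := by simp
  rw [← integral_map (φ := (Prod.fst : α × β → α)) measurable_fst.aemeasurable
    (by rw [hmap]; exact hf.aestronglyMeasurable), hmap]

lemma integral_comp_snd_prod {f : β → ℝ} (hf : Measurable f) :
    ∫ z, f z.2 ∂(p.prod p') = ∫ y, f y ∂p' := by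
  have hmap : Measure.map Prod.snd (p.prod p') = p' := by simp
  rw [← integral_map (φ := (Prod.snd : α × β → β)) measurable_snd.aemeasurable
    (by rw [hmap]; exact hf.aestronglyMeasurable), hmap]

lemma klDiv_prod_eq (hpq : p ≪ q) (hp'q' : p' ≪ q')
    (h1 : Integrable (llr p q) p) (h2 : Integrable (llr p' q') p') :
    klDiv (p.prod p') (q.prod q')
      = ((∫ y, llr p q y ∂p + ∫ y, llr p' q' y ∂p' : ℝ) : EReal) := by
  have i1 : Integrable (fun z : α × β => llr p q z.1) (p.prod p') :=
    integrable_comp_fst_prod (measurable_llr _ _) h1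
  have i2 : Integrable (fun z : α × β => llr p' q' z.2) (p.prod p') :=
    integrable_comp_snd_prod (measurable_llr _ _) h2
  have hsum : Integrable (fun z : α × β => llr p q z.1 + llr p' q' z.2) (p.prod p') := i1.add i2
  have hint : Integrable (llr (p.prod p') (q.prod q')) (p.prod p') :=
    hsum.congr (llr_prod_ae hpq hp'q').symm
  rw [klDiv, if_pos ⟨hpq.prod hp'q', hint⟩]
  norm_cast
  rw [integral_congr_ae (llr_prod_ae hpq hp'q'), integral_add i1 i2,
    integral_comp_fst_prod (measurable_llr _ _), integral_comp_snd_prod (measurable_llr _ _)]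

end AuxProd

section Final

lemma gaussian_shift_ac (m δ : ℝ) {v : ℝ≥0} (hv : v ≠ 0) :
    gaussianReal (m + δ) v ≪ gaussianReal m v :=
  (gaussianReal_absolutelyContinuous _ hv).trans (gaussianReal_absolutelyContinuous' _ hv)

lemma gaussian_llr_int (m δ : ℝ) {v : ℝ≥0} (hv : v ≠ 0) :
    Integrable (llr (gaussianReal (m + δ) v) (gaussianReal m v)) (gaussianReal (m + δ) v) ∧
    ∫ y, llr (gaussianReal (m + δ) v) (gaussianReal m v) y ∂(gaussianReal (m + δ) v)
      = δ ^ 2 / (2 * (v : ℝ)) := by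
  have hvpos : (0:ℝ) < (v:ℝ) := by exact_mod_cast pos_iff_ne_zero.mpr hv
  have hae : llr (gaussianReal (m + δ) v) (gaussianReal m v)
      =ᵐ[gaussianReal (m + δ) v] fun y => (2 * δ * (y - m) - δ ^ 2) / (2 * (v : ℝ)) :=
    (gaussian_shift_ac m δ hv).ae_eq (llr_gaussian_ae m δ hv)
  have hfeq : (fun y : ℝ => (2 * δ * (y - m) - δ ^ 2) / (2 * (v : ℝ)))
      = fun y : ℝ => (δ / (v : ℝ)) * y + (-(2 * δ * m + δ ^ 2) / (2 * (v : ℝ))) := by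
    funext y; field_simp; ring
  have hfint : Integrable (fun y : ℝ => (2 * δ * (y - m) - δ ^ 2) / (2 * (v : ℝ)))
      (gaussianReal (m + δ) v) := by
    rw [hfeq]
    exact ((integrable_id_gaussianReal (m + δ) hv).const_mul _).add (integrable_const _)
  refine ⟨hfint.congr hae.symm, ?_⟩
  rw [integral_congr_ae hae, hfeq,
    integral_add ((integrable_id_gaussianReal (m + δ) hv).const_mul _) (integrable_const _),
    integral_const, integral_const_mul, integral_id_gaussianReal (m + δ) hv]
  simp only [probReal_univ, smul_eq_mul, one_mul]
  field_simp
  ring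


/-- Pointwise feasibility of the augmented kernels: if `D_KL(κ(x) ‖ κ̄(x)) ≤ η_dyn(x)` for all
`x` and the stage cost is perturbed by `δc(x)` with `|δc(x)| ≤ Δ(x)`, then for every `x` the
augmented kernel `κ(x) ⊗ N(ℓ(x) + δc(x), σ²)` lies within KL radius `η_dyn(x) + Δ(x)²/(2σ²)`
of the nominal augmented kernel `κ̄(x) ⊗ N(ℓ(x), σ²)`. -/
theorem kl_augmented_kernel_pointwise_bound {X Y : Type*} [MeasurableSpace X] [MeasurableSpace Y]
    (κ κbar : ProbabilityTheory.Kernel X Y)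
    [ProbabilityTheory.IsMarkovKernel κ] [ProbabilityTheory.IsMarkovKernel κbar]
    (ηdyn : X → ℝ) (hκ : ∀ x, klDiv (κ x) (κbar x) ≤ ((ηdyn x : ℝ) : EReal))
    (σ : ℝ) (hσ : 0 < σ) (ℓ δc Δ : X → ℝ) (hℓ : Measurable ℓ) (hδc : Measurable δc)
    (hδ : ∀ x, |δc x| ≤ Δ x) :
    ∀ x : X,
      klDiv ((κ x).prod (gaussianReal (ℓ x + δc x) (σ ^ 2).toNNReal))
          ((κbar x).prod (gaussianReal (ℓ x) (σ ^ 2).toNNReal))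
        ≤ ((ηdyn x + (Δ x) ^ 2 / (2 * σ ^ 2) : ℝ) : EReal) := by
  intro x
  set v : ℝ≥0 := (σ ^ 2).toNNReal with hv_def
  have hσ2 : (0:ℝ) < σ ^ 2 := by positivity
  have hv : v ≠ 0 := by
    simp only [hv_def, ne_eq, Real.toNNReal_eq_zero, not_le]
    exact hσ2
  have hvR : ((v : ℝ)) = σ ^ 2 := Real.coe_toNNReal _ hσ2.le
  -- extract finiteness of the dynamics KL
  have hx := hκ x
  rw [klDiv] at hx
  split_ifs at hx with hc
  swap
  · exact absurd (top_le_iff.mp hx) (EReal.coe_ne_top _)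
  obtain ⟨hac, hint⟩ := hc
  have hI1 : ∫ y, llr (κ x) (κbar x) y ∂(κ x) ≤ ηdyn x := by exact_mod_cast hx
  -- gaussian part
  have hac' := gaussian_shift_ac (ℓ x) (δc x) hv
  obtain ⟨hint', hI2⟩ := gaussian_llr_int (ℓ x) (δc x) hv
  rw [klDiv_prod_eq hac hac' hint hint']
  rw [EReal.coe_le_coe_iff]
  refine add_le_add hI1 ?_
  rw [hI2, hvR]
  have hsq : δc x ^ 2 ≤ Δ x ^ 2 := by
    rw [← sq_abs]; exact pow_le_pow_left₀ (abs_nonneg _) (hδ x) 2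
  exact (div_le_div_iff_of_pos_right (by positivity)).mpr hsq

end Final
end

section
/- Let p, p̄, q be probability measures on a measurable space with p ≪ p̄ ≪ q, let c̄ be a bounded measurable real-valued function, and let η ≥ 0 with D_KL(p ‖ p̄) ≤ η. Then for every α > 0, D_KL(p ‖ q) + ∫ c̄ dp ≤ (1 + α)·η + α · log ∫ ((dp̄/dq)·exp(c̄))^{1/α} dp̄, where dp̄/dq denotes the Radon–Nikodym derivative of p̄ with respect to q (assuming the integral on the right-hand side is finite). -/
open MeasureTheory ProbabilityTheory Real


lemma aux_young_int {X : Type*} [MeasurableSpace X] (p pbar : Measure X)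
    [IsProbabilityMeasure p] [IsProbabilityMeasure pbar]
    (h : p ≪ pbar) (hL : Integrable (llr p pbar) p)
    (φ : X → ℝ) (hφm : Measurable φ) (hφ0 : ∀ x, 0 ≤ φ x)
    (hexp : Integrable (fun x => Real.exp (φ x)) pbar) :
    Integrable φ p := by
  refine ⟨hφm.aestronglyMeasurable, ?_⟩
  rw [hasFiniteIntegral_iff_norm]
  have hmeas : AEMeasurable (fun x => ENNReal.ofReal (φ x)) pbar :=
    (hφm.ennreal_ofReal).aemeasurable
  have h1 : ∫⁻ x, ENNReal.ofReal ‖φ x‖ ∂p = ∫⁻ x, p.rnDeriv pbar x * ENNReal.ofReal (φ x) ∂pbar := by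
    rw [lintegral_rnDeriv_mul h hmeas]
    refine lintegral_congr fun x => by rw [Real.norm_of_nonneg (hφ0 x)]
  rw [h1]
  have hptwise : ∀ᵐ x ∂pbar, p.rnDeriv pbar x * ENNReal.ofReal (φ x)
      ≤ p.rnDeriv pbar x * ENNReal.ofReal (max (llr p pbar x) 0)
        + ENNReal.ofReal (Real.exp (φ x)) := by
    filter_upwards [Measure.rnDeriv_lt_top p pbar] with x hx
    set r := ((p.rnDeriv pbar x).toReal) with hr
    have hr0 : 0 ≤ r := ENNReal.toReal_nonneg
    have hkey : r * φ x ≤ r * max (llr p pbar x) 0 + Real.exp (φ x) := by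
      rcases eq_or_lt_of_le hr0 with heq | hpos
      · simp [← heq]; positivity
      · have hllr : llr p pbar x = Real.log r := rfl
        have h2 : φ x - Real.log r + 1 ≤ Real.exp (φ x - Real.log r) :=
          Real.add_one_le_exp _
        have h3 : Real.exp (φ x - Real.log r) = Real.exp (φ x) / r := by
          rw [Real.exp_sub, Real.exp_log hpos]
        rw [h3] at h2
        have h4 : r * (φ x - Real.log r + 1) ≤ Real.exp (φ x) := by
          rw [div_eq_mul_inv] at h2
          calc r * (φ x - Real.log r + 1) ≤ r * (Real.exp (φ x) * r⁻¹) :=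
                mul_le_mul_of_nonneg_left h2 hr0
          _ = Real.exp (φ x) := by field_simp
        have h5 : Real.log r ≤ max (llr p pbar x) 0 := hllr ▸ le_max_left _ _
        nlinarith [le_max_right (llr p pbar x) (0:ℝ), Real.exp_pos (φ x)]
    have hrepr : p.rnDeriv pbar x = ENNReal.ofReal r := by
      rw [hr, ENNReal.ofReal_toReal hx.ne]
    rw [hrepr, ← ENNReal.ofReal_mul hr0, ← ENNReal.ofReal_mul hr0,
      ← ENNReal.ofReal_add (by positivity) (Real.exp_pos _).le]
    exact ENNReal.ofReal_le_ofReal hkey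
  calc ∫⁻ x, p.rnDeriv pbar x * ENNReal.ofReal (φ x) ∂pbar
      ≤ ∫⁻ x, (p.rnDeriv pbar x * ENNReal.ofReal (max (llr p pbar x) 0)
        + ENNReal.ofReal (Real.exp (φ x))) ∂pbar := lintegral_mono_ae hptwise
    _ = ∫⁻ x, p.rnDeriv pbar x * ENNReal.ofReal (max (llr p pbar x) 0) ∂pbar
        + ∫⁻ x, ENNReal.ofReal (Real.exp (φ x)) ∂pbar :=
        lintegral_add_right _ ((Real.measurable_exp.comp hφm).ennreal_ofReal)
    _ < ⊤ := by
        rw [lintegral_rnDeriv_mul h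
          (((measurable_llr p pbar).max measurable_const).ennreal_ofReal.aemeasurable)]
        have hA : ∫⁻ x, ENNReal.ofReal (max (llr p pbar x) 0) ∂p < ⊤ :=
          (hL.pos_part).lintegral_lt_top
        have hB : ∫⁻ x, ENNReal.ofReal (Real.exp (φ x)) ∂pbar < ⊤ := hexp.lintegral_lt_top
        exact ENNReal.add_lt_top.mpr ⟨hA, hB⟩

lemma aux_kl_nonneg {X : Type*} [MeasurableSpace X] (p ν : Measure X)
    [IsProbabilityMeasure p] [IsProbabilityMeasure ν]
    (h : p ≪ ν) (hInt : Integrable (llr p ν) p) :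
    0 ≤ ∫ x, llr p ν x ∂p := by
  have hrn : Integrable (fun x => (ν.rnDeriv p x).toReal) p := by
    refine integrable_toReal_of_lintegral_ne_top (Measure.measurable_rnDeriv ν p).aemeasurable ?_
    exact (lt_of_le_of_lt (Measure.lintegral_rnDeriv_le) (by simp)).ne
  have hneg : ∫ x, llr ν p x ∂p = - ∫ x, llr p ν x ∂p := by
    rw [← integral_neg]
    exact integral_congr_ae (neg_llr h).symm
  have hbound : (fun x => llr ν p x) ≤ᵐ[p] fun x => (ν.rnDeriv p x).toReal - 1 := by
    filter_upwards [Measure.rnDeriv_lt_top ν p, Measure.rnDeriv_pos' h] with x hx hpos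
    exact Real.log_le_sub_one_of_pos (ENNReal.toReal_pos hpos.ne' hx.ne)
  have hInt' : Integrable (llr ν p) p := (hInt.neg).congr (neg_llr h)
  have h2 : ∫ x, llr ν p x ∂p ≤ ∫ x, ((ν.rnDeriv p x).toReal - 1) ∂p :=
    integral_mono_ae hInt' (hrn.sub (integrable_const 1)) hbound
  have h3 : ∫ x, ((ν.rnDeriv p x).toReal - 1) ∂p ≤ 0 := by
    rw [integral_sub hrn (integrable_const 1), integral_const]
    simp only [measure_univ, probReal_univ, smul_eq_mul, one_mul]
    have h4 : ∫ x, (ν.rnDeriv p x).toReal ∂p ≤ 1 := by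
      rw [integral_toReal (Measure.measurable_rnDeriv ν p).aemeasurable
        (Measure.rnDeriv_lt_top ν p)]
      calc (∫⁻ x, ν.rnDeriv p x ∂p).toReal ≤ (ν Set.univ).toReal :=
            ENNReal.toReal_mono (by simp) Measure.lintegral_rnDeriv_le
      _ = 1 := by simp
    linarith
  linarith [hneg ▸ le_trans h2 h3]

/-- Weak duality (Donsker–Varadhan) bound behind the scalar convex reduction of the DR-FREE
inner maximization: if `p ≪ p̄ ≪ q`, `c̄` is bounded measurable and `D_KL(p ‖ p̄) ≤ η`, then
for every `α > 0`,
`D_KL(p ‖ q) + ∫ c̄ dp ≤ (1 + α)·η + α·log ∫ ((dp̄/dq)·exp c̄)^(1/α) dp̄`. -/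
theorem donsker_varadhan_weak_duality {X : Type*} [MeasurableSpace X]
    (p pbar q : Measure X)
    [IsProbabilityMeasure p] [IsProbabilityMeasure pbar] [IsProbabilityMeasure q]
    (hppbar : p ≪ pbar) (hpbarq : pbar ≪ q)
    (cbar : X → ℝ) (hc_meas : Measurable cbar) (C : ℝ) (hc_bdd : ∀ x, |cbar x| ≤ C)
    (η : ℝ) (hη : 0 ≤ η) (hkl : klDiv p pbar ≤ (η : EReal))
    (α : ℝ) (hα : 0 < α)
    (h_fin : Integrable
      (fun x => ((pbar.rnDeriv q x).toReal * Real.exp (cbar x)) ^ (1 / α)) pbar) :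
    klDiv p q + ((∫ x, cbar x ∂p : ℝ) : EReal)
      ≤ (((1 + α) * η
          + α * Real.log (∫ x,
              ((pbar.rnDeriv q x).toReal * Real.exp (cbar x)) ^ (1 / α) ∂pbar) : ℝ) : EReal) := by
  have hpq : p ≪ q := hppbar.trans hpbarq
  -- extract finiteness of KL(p‖pbar)
  have hcond : p ≪ pbar ∧ Integrable (llr p pbar) p := by
    by_contra hc
    rw [klDiv, if_neg hc] at hkl
    exact absurd hkl (by simp [EReal.coe_lt_top])
  obtain ⟨-, hLint⟩ := hcond
  have hK : ∫ x, llr p pbar x ∂p ≤ η := by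
    rw [klDiv, if_pos ⟨hppbar, hLint⟩] at hkl
    exact_mod_cast hkl
  set g : X → ℝ := fun x => (llr pbar q x + cbar x) / α with hg_def
  have hg_meas : Measurable g := ((measurable_llr _ _).add hc_meas).div_const α
  -- exp g agrees pbar-a.e. with the integrand
  have hexp_g : (fun x => ((pbar.rnDeriv q x).toReal * Real.exp (cbar x)) ^ (1 / α))
      =ᵐ[pbar] fun x => Real.exp (g x) := by
    filter_upwards [Measure.rnDeriv_pos hpbarq, hpbarq.ae_le (Measure.rnDeriv_lt_top pbar q)] with x hpos hlt
    have hr : 0 < (pbar.rnDeriv q x).toReal := ENNReal.toReal_pos hpos.ne' hlt.ne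
    have hb : 0 < (pbar.rnDeriv q x).toReal * Real.exp (cbar x) := by positivity
    rw [Real.rpow_def_of_pos hb, Real.log_mul hr.ne' (Real.exp_pos _).ne', Real.log_exp]
    simp only [hg_def, llr]
    ring_nf
  have hE : Integrable (fun x => Real.exp (g x)) pbar := h_fin.congr hexp_g
  set Z : ℝ := ∫ x, Real.exp (g x) ∂pbar with hZ_def
  have hZeq : ∫ x, ((pbar.rnDeriv q x).toReal * Real.exp (cbar x)) ^ (1 / α) ∂pbar = Z :=
    integral_congr_ae hexp_g
  -- integrability of cbar wrt p
  have hcInt : Integrable cbar p := by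
    refine Integrable.mono' (integrable_const C) hc_meas.aestronglyMeasurable ?_
    exact Filter.Eventually.of_forall fun x => by
      rw [Real.norm_eq_abs]; exact hc_bdd x
  -- positive part of g is p-integrable
  have hgpos : Integrable (fun x => max (g x) 0) p := by
    refine aux_young_int p pbar hppbar hLint _ (hg_meas.max measurable_const)
      (fun x => le_max_right _ _) ?_
    refine Integrable.mono' (hE.add (integrable_const 1))
      ((Real.measurable_exp.comp (hg_meas.max measurable_const)).aestronglyMeasurable) ?_
    refine Filter.Eventually.of_forall fun x => ?_
    simp only [Pi.add_apply, Function.comp_apply]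
    rw [Real.norm_of_nonneg (Real.exp_pos _).le]
    rcases le_or_gt (g x) 0 with hle | hlt
    · rw [max_eq_right hle, Real.exp_zero]; linarith [Real.exp_pos (g x)]
    · rw [max_eq_left hlt.le]; linarith [Real.exp_pos (g x)]
  -- negative part of llr pbar q is p-integrable
  have hmInt : Integrable (fun x => max (- llr pbar q x) 0) p := by
    refine aux_young_int p pbar hppbar hLint _
      ((measurable_llr pbar q).neg.max measurable_const) (fun x => le_max_right _ _) ?_
    have hrnInt : Integrable (fun x => (q.rnDeriv pbar x).toReal) pbar := by
      refine integrable_toReal_of_lintegral_ne_top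
        (Measure.measurable_rnDeriv q pbar).aemeasurable ?_
      exact (lt_of_le_of_lt (Measure.lintegral_rnDeriv_le) (by simp)).ne
    refine Integrable.mono' ((integrable_const 1).add hrnInt)
      ((Real.measurable_exp.comp
        ((measurable_llr pbar q).neg.max measurable_const)).aestronglyMeasurable) ?_
    filter_upwards [exp_neg_llr hpbarq] with x hx
    simp only [Pi.add_apply, Function.comp_apply]
    rw [Real.norm_of_nonneg (Real.exp_pos _).le]
    have h0 : 0 ≤ (q.rnDeriv pbar x).toReal := ENNReal.toReal_nonneg
    rcases le_or_gt (- llr pbar q x) 0 with hle | hlt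
    · rw [max_eq_right hle, Real.exp_zero]; linarith
    · rw [max_eq_left hlt.le, hx]; linarith [Real.exp_pos (0:ℝ)]
  -- llr pbar q is p-integrable
  have hllrInt : Integrable (llr pbar q) p := by
    have hb : Integrable (fun x => α * max (g x) 0 + C + max (- llr pbar q x) 0) p :=
      ((hgpos.const_mul α).add (integrable_const C)).add hmInt
    refine Integrable.mono' hb (measurable_llr pbar q).aestronglyMeasurable ?_
    refine Filter.Eventually.of_forall fun x => ?_
    rw [Real.norm_eq_abs, abs_le]
    have hgx : llr pbar q x = α * g x - cbar x := by
      simp only [hg_def]; field_simp; ring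
    have h1 := le_max_left (g x) 0
    have h2 := le_max_right (g x) 0
    have h3 := le_max_left (- llr pbar q x) 0
    have h4 := le_max_right (- llr pbar q x) 0
    have h5 := abs_le.mp (hc_bdd x)
    constructor
    · nlinarith
    · nlinarith
  have hgInt : Integrable g p := (hllrInt.add hcInt).div_const α
  -- chain rule
  have hchain : llr p q =ᵐ[p] fun x => llr p pbar x + llr pbar q x := by
    filter_upwards [hpq.ae_le (Measure.rnDeriv_mul_rnDeriv hppbar),
      Measure.rnDeriv_pos hppbar, hppbar.ae_le (Measure.rnDeriv_pos hpbarq),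
      hppbar.ae_le (Measure.rnDeriv_lt_top p pbar),
      hpq.ae_le (Measure.rnDeriv_lt_top pbar q)] with x hx h1 h2 h3 h4
    rw [llr, ← hx, Pi.mul_apply, ENNReal.toReal_mul, llr, llr,
      Real.log_mul (ENNReal.toReal_pos h1.ne' h3.ne).ne' (ENNReal.toReal_pos h2.ne' h4.ne).ne']
  have hllrpqInt : Integrable (llr p q) p := (hLint.add hllrInt).congr hchain.symm
  -- variational step via tilted measure
  have hZpos : 0 < Z := integral_exp_pos hE
  haveI : NeZero pbar := ⟨IsProbabilityMeasure.ne_zero pbar⟩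
  haveI : IsProbabilityMeasure (pbar.tilted g) := isProbabilityMeasure_tilted hE
  have hpν : p ≪ pbar.tilted g := hppbar.trans (absolutelyContinuous_tilted hE)
  have htilt : llr p (pbar.tilted g) =ᵐ[p]
      fun x => - g x + Real.log Z + llr p pbar x := llr_tilted_right hppbar hE
  have hIntν : Integrable (llr p (pbar.tilted g)) p :=
    (((hgInt.neg.add (integrable_const _))).add hLint).congr htilt.symm
  have hvar : ∫ x, g x ∂p ≤ ∫ x, llr p pbar x ∂p + Real.log Z := by
    have h0 := aux_kl_nonneg p (pbar.tilted g) hpν hIntν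
    rw [integral_congr_ae htilt] at h0
    have hf2 : Integrable (fun x => -g x) p := hgInt.neg
    have hf1 : Integrable (fun x => -g x + Real.log Z) p := hf2.add (integrable_const _)
    rw [integral_add hf1 hLint, integral_add hf2 (integrable_const _),
      integral_neg, integral_const] at h0
    simp only [measure_univ, probReal_univ, smul_eq_mul, one_mul] at h0
    linarith
  -- assemble
  rw [klDiv, if_pos ⟨hpq, hllrpqInt⟩, ← EReal.coe_add, EReal.coe_le_coe_iff]
  rw [integral_congr_ae hchain, integral_add hLint hllrInt]
  have hsplit : ∫ x, llr pbar q x ∂p + ∫ x, cbar x ∂p = α * ∫ x, g x ∂p := by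
    rw [hg_def]
    rw [integral_div, ← integral_add hllrInt hcInt]
    field_simp
  have hKη : ∫ x, llr p pbar x ∂p ≤ η := hK
  rw [hZeq]
  have h6 : α * ∫ x, g x ∂p ≤ α * (∫ x, llr p pbar x ∂p + Real.log Z) :=
    mul_le_mul_of_nonneg_left hvar hα.le
  have h7 : α * ∫ x, llr p pbar x ∂p ≤ α * η := mul_le_mul_of_nonneg_left hKη hα.le
  have h8 : α * (∫ x, llr p pbar x ∂p + Real.log Z)
      = α * ∫ x, llr p pbar x ∂p + α * Real.log Z := by ring
  linarith
end

section
/- Let p̄ be a probability mass function on a finite nonempty type with p̄(x) > 0 for every x, and let ε ≥ 0. Then the maximum of the Shannon entropy H(p) = −∑ₓ p(x) log p(x) over all probability mass functions p satisfying D_KL(p ‖ p̄) ≤ ε is attained, and it is attained by a tilted distribution of the form p_β(x) = p̄(x)^β / (∑_y p̄(y)^β) for some β ∈ [0, 1]. -/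
open Real Finset

/-- The power-tilted (flattened) probability mass function `p̄^β / ∑ p̄^β`. -/
noncomputable def tiltedPMF {α : Type*} [Fintype α] (pbar : α → ℝ) (β : ℝ) (x : α) : ℝ :=
  pbar x ^ β / ∑ y, pbar y ^ β

lemma term_lb {p q : ℝ} (hp : 0 ≤ p) (hq : 0 < q) : p - q ≤ p * Real.log (p / q) := by
  rcases eq_or_lt_of_le hp with h | h
  · simp [← h]; linarith
  · have h1 : Real.log (q / p) ≤ q / p - 1 := Real.log_le_sub_one_of_pos (by positivity)
    have h2 : Real.log (p / q) = - Real.log (q / p) := by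
      rw [← Real.log_inv]; congr 1; field_simp
    have h3 : p * Real.log (q / p) ≤ p * (q / p - 1) := mul_le_mul_of_nonneg_left h1 h.le
    have h4 : p * (q / p - 1) = q - p := by field_simp
    rw [h2]; nlinarith

lemma gibbs {α : Type*} [Fintype α] (p q : α → ℝ) (hp : ∀ x, 0 ≤ p x) (hq : ∀ x, 0 < q x)
    (hps : ∑ x, p x = 1) (hqs : ∑ x, q x = 1) : 0 ≤ ∑ x, p x * Real.log (p x / q x) := by
  have h : ∑ x, (p x - q x) ≤ ∑ x, p x * Real.log (p x / q x) :=
    Finset.sum_le_sum fun x _ => term_lb (hp x) (hq x)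
  rw [Finset.sum_sub_distrib, hps, hqs] at h
  linarith

lemma gibbs_eq {α : Type*} [Fintype α] (p q : α → ℝ) (hp : ∀ x, 0 ≤ p x) (hq : ∀ x, 0 < q x)
    (hps : ∑ x, p x = 1) (hqs : ∑ x, q x = 1)
    (hle : ∑ x, p x * Real.log (p x / q x) ≤ 0) : ∀ x, p x = q x := by
  have h0 := gibbs p q hp hq hps hqs
  have heq : ∑ x, p x * Real.log (p x / q x) = ∑ x, (p x - q x) := by
    rw [Finset.sum_sub_distrib, hps, hqs]; linarith
  have hterm : ∀ x ∈ Finset.univ, p x - q x = p x * Real.log (p x / q x) := by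
    intro x hx
    by_contra hne
    have hlt : p x - q x < p x * Real.log (p x / q x) :=
      lt_of_le_of_ne (term_lb (hp x) (hq x)) hne
    have := Finset.sum_lt_sum (fun i _ => term_lb (hp i) (hq i)) ⟨x, hx, hlt⟩
    linarith [heq]
  intro x
  have h := hterm x (Finset.mem_univ x)
  rcases eq_or_lt_of_le (hp x) with h0' | h0'
  · exfalso; rw [← h0', zero_mul] at h; linarith [hq x]
  · by_contra hne
    have hr : q x / p x ≠ 1 := by
      intro h1
      exact hne ((div_eq_one_iff_eq h0'.ne').mp h1).symm
    have hlog := Real.log_lt_sub_one_of_pos (div_pos (hq x) h0') hr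
    have h3 : p x * Real.log (q x / p x) < p x * (q x / p x - 1) :=
      mul_lt_mul_of_pos_left hlog h0'
    have h4 : p x * (q x / p x - 1) = q x - p x := by field_simp
    have h5 : Real.log (p x / q x) = - Real.log (q x / p x) := by
      rw [← Real.log_inv]; congr 1; field_simp
    rw [h5] at h
    nlinarith

lemma term_split {p q : ℝ} (hp : 0 ≤ p) (hq : 0 < q) :
    p * Real.log (p / q) = p * Real.log p - p * Real.log q := by
  rcases eq_or_lt_of_le hp with h | h
  · simp [← h]
  · rw [Real.log_div h.ne' hq.ne', mul_sub]

lemma sum_split {α : Type*} [Fintype α] (p q : α → ℝ) (hp : ∀ x, 0 ≤ p x) (hq : ∀ x, 0 < q x) :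
    ∑ x, p x * Real.log (p x / q x) = ∑ x, p x * Real.log (p x) - ∑ x, p x * Real.log (q x) := by
  rw [← Finset.sum_sub_distrib]
  exact Finset.sum_congr rfl fun x _ => term_split (hp x) (hq x)

section tilted
variable {α : Type*} [Fintype α] [Nonempty α] (pbar : α → ℝ) (hpos : ∀ x, 0 < pbar x)
include hpos

lemma Z_pos (β : ℝ) : 0 < ∑ y, pbar y ^ β :=
  Finset.sum_pos (fun y _ => Real.rpow_pos_of_pos (hpos y) β) Finset.univ_nonempty

lemma tilted_pos (β : ℝ) (x : α) : 0 < tiltedPMF pbar β x :=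
  div_pos (Real.rpow_pos_of_pos (hpos x) β) (Z_pos pbar hpos β)

lemma tilted_sum_one (β : ℝ) : ∑ x, tiltedPMF pbar β x = 1 := by
  unfold tiltedPMF
  rw [← Finset.sum_div, div_self (Z_pos pbar hpos β).ne']

lemma tilted_log (β : ℝ) (x : α) :
    Real.log (tiltedPMF pbar β x) = β * Real.log (pbar x) - Real.log (∑ y, pbar y ^ β) := by
  unfold tiltedPMF
  rw [Real.log_div (Real.rpow_pos_of_pos (hpos x) β).ne' (Z_pos pbar hpos β).ne',
    Real.log_rpow (hpos x)]

lemma sum_mul_log_tilted (β : ℝ) (r : α → ℝ) (hrs : ∑ x, r x = 1) :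
    ∑ x, r x * Real.log (tiltedPMF pbar β x)
      = β * (∑ x, r x * Real.log (pbar x)) - Real.log (∑ y, pbar y ^ β) := by
  have : ∀ x, r x * Real.log (tiltedPMF pbar β x)
      = β * (r x * Real.log (pbar x)) - r x * Real.log (∑ y, pbar y ^ β) := by
    intro x; rw [tilted_log pbar hpos]; ring
  rw [Finset.sum_congr rfl fun x _ => this x, Finset.sum_sub_distrib, ← Finset.mul_sum,
    ← Finset.sum_mul, hrs, one_mul]

/-- Key optimality lemma. -/
lemma key (hsum : ∑ x, pbar x = 1) (ε β : ℝ) (hβ0 : 0 ≤ β) (hβ1 : β < 1)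
    (hfe : β * ε ≤ β * ∑ x, tiltedPMF pbar β x * Real.log (tiltedPMF pbar β x / pbar x))
    (p : α → ℝ) (hp : ∀ x, 0 ≤ p x) (hps : ∑ x, p x = 1)
    (hD : ∑ x, p x * Real.log (p x / pbar x) ≤ ε) :
    (-∑ x, p x * Real.log (p x)) ≤ (-∑ x, tiltedPMF pbar β x * Real.log (tiltedPMF pbar β x)) := by
  set t := tiltedPMF pbar β with ht
  set A := ∑ x, p x * Real.log (p x) with hA
  set B := ∑ x, t x * Real.log (t x) with hB
  have htpos := tilted_pos pbar hpos β
  have hts := tilted_sum_one pbar hpos β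
  -- (1) Gibbs
  have h1 : 0 ≤ A - ∑ x, p x * Real.log (t x) := by
    have := gibbs p t hp htpos hps hts
    rwa [sum_split p t hp htpos] at this
  -- (2)
  have h2 := sum_mul_log_tilted pbar hpos β p hps
  -- (3)
  have h3 : ∑ x, p x * Real.log (p x / pbar x) = A - ∑ x, p x * Real.log (pbar x) :=
    sum_split p pbar hp hpos
  -- (4)
  have h4 : ∑ x, t x * Real.log (t x / pbar x) = B - ∑ x, t x * Real.log (pbar x) :=
    sum_split t pbar (fun x => (htpos x).le) hpos
  -- (5)
  have h5 := sum_mul_log_tilted pbar hpos β t hts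
  rw [h3] at hD
  rw [h4] at hfe
  have hβD : β * (A - ∑ x, p x * Real.log (pbar x)) ≤ β * ε := mul_le_mul_of_nonneg_left hD hβ0
  have hBA : (1 - β) * B ≤ (1 - β) * A := by nlinarith
  have := le_of_mul_le_mul_left hBA (by linarith : (0:ℝ) < 1 - β)
  linarith

end tilted

noncomputable def klTilted {α : Type*} [Fintype α] (pbar : α → ℝ) (β : ℝ) : ℝ :=
  ∑ x, tiltedPMF pbar β x * Real.log (tiltedPMF pbar β x / pbar x)

section cont
variable {α : Type*} [Fintype α] [Nonempty α] (pbar : α → ℝ) (hpos : ∀ x, 0 < pbar x)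
include hpos

lemma klTilted_continuous : Continuous (klTilted pbar) := by
  set Zexp : ℝ → ℝ := fun β => ∑ y, Real.exp (Real.log (pbar y) * β) with hZexp
  have hZc : Continuous Zexp :=
    continuous_finset_sum _ fun y _ =>
      Real.continuous_exp.comp (continuous_const.mul continuous_id)
  have hZpos : ∀ β, 0 < Zexp β :=
    fun β => Finset.sum_pos (fun y _ => Real.exp_pos _) Finset.univ_nonempty
  have hZeq : ∀ β, (∑ y, pbar y ^ β) = Zexp β := by
    intro β
    exact Finset.sum_congr rfl fun y _ => Real.rpow_def_of_pos (hpos y) β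
  have heq : klTilted pbar = fun β => ∑ x,
      (Real.exp (Real.log (pbar x) * β) / Zexp β) *
        ((β * Real.log (pbar x) - Real.log (Zexp β)) - Real.log (pbar x)) := by
    funext β
    unfold klTilted
    refine Finset.sum_congr rfl fun x _ => ?_
    have h1 : tiltedPMF pbar β x = Real.exp (Real.log (pbar x) * β) / Zexp β := by
      unfold tiltedPMF
      rw [Real.rpow_def_of_pos (hpos x), hZeq]
    have h2 : Real.log (tiltedPMF pbar β x / pbar x)
        = (β * Real.log (pbar x) - Real.log (Zexp β)) - Real.log (pbar x) := by
      rw [Real.log_div (tilted_pos pbar hpos β x).ne' (hpos x).ne', tilted_log pbar hpos, hZeq]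
    rw [h2, h1]
  rw [heq]
  have hlZ : Continuous fun β => Real.log (Zexp β) := hZc.log fun β => (hZpos β).ne'
  refine continuous_finset_sum _ fun x _ => Continuous.mul ?_ ?_
  · exact (Real.continuous_exp.comp (continuous_const.mul continuous_id)).div hZc
      fun β => (hZpos β).ne'
  · exact (((continuous_id.mul continuous_const).sub hlZ).sub continuous_const)

lemma tilted_one (hsum : ∑ x, pbar x = 1) : tiltedPMF pbar 1 = pbar := by
  funext x
  unfold tiltedPMF
  simp only [Real.rpow_one]
  rw [hsum, div_one]

lemma klTilted_one (hsum : ∑ x, pbar x = 1) : klTilted pbar 1 = 0 := by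
  unfold klTilted
  rw [tilted_one pbar hpos hsum]
  simp [div_self (hpos _).ne']

end cont

/-- Discrete maximum-entropy trust region: for a strictly positive nominal pmf `p̄` on a finite
nonempty type and a KL budget `ε ≥ 0`, the maximum of the Shannon entropy
`H(p) = -∑ p(x) log p(x)` over pmfs `p` with `D_KL(p ‖ p̄) ≤ ε` is attained, and it is attained
by a tilted distribution `p_β(x) = p̄(x)^β / ∑_y p̄(y)^β` for some `β ∈ [0, 1]`. -/
theorem maxent_in_kl_ball_is_tilted {α : Type*} [Fintype α] [Nonempty α]
    (pbar : α → ℝ) (hpos : ∀ x, 0 < pbar x) (hsum : ∑ x, pbar x = 1)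
    (ε : ℝ) (hε : 0 ≤ ε) :
    ∃ β ∈ Set.Icc (0 : ℝ) 1,
      (∀ x, 0 ≤ tiltedPMF pbar β x) ∧ (∑ x, tiltedPMF pbar β x = 1) ∧
      (∑ x, tiltedPMF pbar β x * Real.log (tiltedPMF pbar β x / pbar x)) ≤ ε ∧
      ∀ p : α → ℝ, (∀ x, 0 ≤ p x) → (∑ x, p x = 1) →
        (∑ x, p x * Real.log (p x / pbar x)) ≤ ε →
        (-∑ x, p x * Real.log (p x)) ≤ (-∑ x, tiltedPMF pbar β x * Real.log (tiltedPMF pbar β x)) := by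
  by_cases hcase : klTilted pbar 0 ≤ ε
  · refine ⟨0, ⟨le_refl 0, zero_le_one⟩, fun x => (tilted_pos pbar hpos 0 x).le,
      tilted_sum_one pbar hpos 0, hcase, ?_⟩
    intro p hp hps hD
    exact key pbar hpos hsum ε 0 le_rfl zero_lt_one (by simp) p hp hps hD
  · push_neg at hcase
    rcases eq_or_lt_of_le hε with hε0 | hε0
    · -- ε = 0, take β = 1
      have hteq := tilted_one pbar hpos hsum
      refine ⟨1, ⟨zero_le_one, le_rfl⟩, ?_, ?_, ?_, ?_⟩
      · intro x; rw [hteq]; exact (hpos x).le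
      · rw [hteq]; exact hsum
      · rw [hteq]; simp [div_self (hpos _).ne']; exact hε
      · intro p hp hps hD
        have hpe := gibbs_eq p pbar hp hpos hps hsum (by linarith)
        rw [hteq]
        have : ∑ x, p x * Real.log (p x) = ∑ x, pbar x * Real.log (pbar x) :=
          Finset.sum_congr rfl fun x _ => by rw [hpe x]
        rw [this]
    · -- 0 < ε, IVT
      have hcont : ContinuousOn (klTilted pbar) (Set.Icc 0 1) :=
        (klTilted_continuous pbar hpos).continuousOn
      have hf1 : klTilted pbar 1 = 0 := klTilted_one pbar hpos hsum
      have hmem : ε ∈ Set.Icc (klTilted pbar 1) (klTilted pbar 0) :=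
        ⟨by rw [hf1]; exact hε, hcase.le⟩
      obtain ⟨β, hβmem, hfβ⟩ := intermediate_value_Icc' zero_le_one hcont hmem
      have hβ1 : β < 1 :=
        lt_of_le_of_ne hβmem.2 (fun h => by rw [h, hf1] at hfβ; linarith)
      refine ⟨β, hβmem, fun x => (tilted_pos pbar hpos β x).le, tilted_sum_one pbar hpos β,
        le_of_eq hfβ, ?_⟩
      intro p hp hps hD
      exact key pbar hpos hsum ε β hβmem.1 hβ1 (le_of_eq (by rw [show (∑ x, tiltedPMF pbar β x * Real.log (tiltedPMF pbar β x / pbar x)) = klTilted pbar β from rfl, hfβ])) p hp hps hD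
end

section
/- Fix a horizon N ≥ 1 and σ > 0. Let μ be a probability measure on X₀; for k = 1, …, N let κ_k, κ̄_k be Markov kernels such that D_KL(κ_k(h) ‖ κ̄_k(h)) ≤ η_k for every history h, and let ℓ_k, δc_k be measurable real-valued functions of the history with |δc_k| ≤ Δ_k pointwise. Form the augmented kernels κ_k^aug(h) = κ_k(h) ⊗ N(ℓ_k(h) + δc_k(h), σ²) and κ̄_k^aug(h) = κ̄_k(h) ⊗ N(ℓ_k(h), σ²). Then the augmented path measures satisfy D_KL(μ ⊗ κ₁^aug ⊗ ⋯ ⊗ κ_N^aug ‖ μ ⊗ κ̄₁^aug ⊗ ⋯ ⊗ κ̄_N^aug) ≤ ∑_{k=1}^N (η_k + Δ_k²/(2σ²)). -/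
open MeasureTheory ProbabilityTheory Real

/-- The space of augmented histories up to time `k`: at each step `k ≥ 1` the state is augmented
with a real-valued running-cost coordinate. -/
def AugPathSpace (X : ℕ → Type) : ℕ → Type
  | 0 => X 0
  | k + 1 => AugPathSpace X k × (X (k + 1) × ℝ)

instance AugPathSpace.instMeasurableSpace (X : ℕ → Type) [∀ k, MeasurableSpace (X k)] :
    ∀ k, MeasurableSpace (AugPathSpace X k)
  | 0 => inferInstanceAs (MeasurableSpace (X 0))
  | k + 1 => @Prod.instMeasurableSpace _ _ (AugPathSpace.instMeasurableSpace X k)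
      inferInstance

open scoped ProbabilityTheory in
/-- The augmented path measure over horizon `k`, obtained by iterated composition-product of an
initial measure with augmented Markov kernels. -/
noncomputable def augPathMeasure {X : ℕ → Type} [∀ k, MeasurableSpace (X k)]
    (μ : Measure (X 0))
    (κ : ∀ k, ProbabilityTheory.Kernel (AugPathSpace X k) (X (k + 1) × ℝ)) :
    ∀ k, Measure (AugPathSpace X k)
  | 0 => μ
  | k + 1 => (augPathMeasure μ κ k) ⊗ₘ (κ k)

open scoped ENNReal NNReal

namespace KLProof

variable {α : Type*} [MeasurableSpace α] {β : Type*} [MeasurableSpace β]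

/-- KL divergence of `p` w.r.t. `q` is well defined and bounded by `K`. -/
def KLB (p q : Measure α) (K : ℝ) : Prop :=
  p ≪ q ∧ Integrable (llr p q) p ∧ ∫ x, llr p q x ∂p ≤ K

lemma integrable_of_bdd {μ : Measure α} [IsFiniteMeasure μ] {f : α → ℝ} (hf : Measurable f)
    {C : ℝ} (hC : ∀ x, |f x| ≤ C) : Integrable f μ := by
  refine ⟨hf.aestronglyMeasurable, ?_⟩
  exact HasFiniteIntegral.mono' (integrable_const C).hasFiniteIntegral (ae_of_all _ hC)

lemma aux_mul_neg_log {t : ℝ} (ht : 0 < t) : t * max (-Real.log t) 0 ≤ Real.exp (-1) := by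
  rcases lt_or_ge t 1 with h1 | h1
  · rw [max_eq_left (by linarith [Real.log_neg ht h1])]
    have hinv : (0:ℝ) < t⁻¹ * Real.exp (-1) := by positivity
    have := Real.log_le_sub_one_of_pos hinv
    rw [Real.log_mul (by positivity) (Real.exp_ne_zero _), Real.log_exp, Real.log_inv] at this
    have h2 : -Real.log t ≤ t⁻¹ * Real.exp (-1) := by linarith
    calc t * (-Real.log t) ≤ t * (t⁻¹ * Real.exp (-1)) := by nlinarith
      _ = Real.exp (-1) := by field_simp
  · rw [max_eq_right (by simpa using Real.log_nonneg h1)]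
    simp [(Real.exp_pos _).le]

/-- One direction of the Donsker–Varadhan variational formula. -/
lemma integral_le_integral_llr_add_log (p q : Measure α)
    [IsProbabilityMeasure p] [IsProbabilityMeasure q]
    (hpq : p ≪ q) (hint : Integrable (llr p q) p) {g : α → ℝ} (hg : Measurable g)
    {C : ℝ} (hC : ∀ x, |g x| ≤ C) :
    ∫ x, g x ∂p ≤ ∫ x, llr p q x ∂p + Real.log (∫ x, Real.exp (g x) ∂q) := by
  set ρ : α → ℝ≥0∞ := p.rnDeriv q with hρ
  have hρmeas : Measurable ρ := Measure.measurable_rnDeriv p q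
  have hρfin : ∀ᵐ x ∂q, ρ x ≠ ∞ := Measure.rnDeriv_ne_top p q
  set A : Set α := {x | ρ x ≠ 0} with hAdef
  have hA : MeasurableSet A := (hρmeas (measurableSet_singleton 0)).compl
  have hexpg_int : Integrable (fun x ↦ Real.exp (g x)) q := by
    refine integrable_of_bdd (Real.measurable_exp.comp hg) (C := Real.exp C) fun x ↦ ?_
    rw [abs_of_nonneg (Real.exp_pos _).le]
    exact Real.exp_le_exp.2 ((le_abs_self _).trans (hC x))
  have hqA : q A ≠ 0 := by
    intro h0
    have hae : ∀ᵐ x ∂q, ρ x = 0 := by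
      have h0' : q {x | ¬ ρ x = 0} = 0 := h0
      rwa [← ae_iff] at h0'
    have h1 : p Set.univ = 0 := by
      rw [← Measure.lintegral_rnDeriv hpq, lintegral_congr_ae hae, lintegral_zero]
    simp [measure_univ] at h1
  set L' : ℝ := ∫ x in A, Real.exp (g x) ∂q with hL'def
  have hL'pos : 0 < L' := by
    have h1 : Real.exp (-C) * (q A).toReal ≤ L' := by
      have : ∫ x in A, Real.exp (-C) ∂q ≤ L' :=
        setIntegral_mono (integrable_const _).integrableOn hexpg_int.integrableOn
          fun x ↦ Real.exp_le_exp.2 ((neg_le_neg (hC x)).trans (neg_abs_le _))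
      simpa [setIntegral_const, mul_comm, Measure.real] using this
    have h2 : 0 < (q A).toReal := ENNReal.toReal_pos hqA (measure_ne_top _ _)
    nlinarith [Real.exp_pos (-C)]
  have hL'le : L' ≤ ∫ x, Real.exp (g x) ∂q :=
    setIntegral_le_integral hexpg_int (ae_of_all _ fun x ↦ (Real.exp_pos _).le)
  set φ : α → ℝ := fun x ↦ g x - llr p q x - Real.log L' with hφdef
  have hg_int : Integrable g p := integrable_of_bdd hg hC
  have hφint : Integrable φ p := (hg_int.sub hint).sub (integrable_const _)
  -- express p as a withDensity of q
  set ρ' : α → ℝ≥0 := fun x ↦ (ρ x).toNNReal with hρ'def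
  have hρ'meas : Measurable ρ' := hρmeas.ennreal_toNNReal
  have hp_eq : q.withDensity (fun x ↦ (ρ' x : ℝ≥0∞)) = p := by
    have : (fun x ↦ ((ρ' x : ℝ≥0∞))) =ᵐ[q] ρ := by
      filter_upwards [hρfin] with x hx using ENNReal.coe_toNNReal hx
    rw [withDensity_congr_ae this, Measure.withDensity_rnDeriv_eq p q hpq]
  set fq : α → ℝ := A.indicator (fun x ↦ Real.exp (g x) / L') with hfqdef
  have hsmul : (fun x ↦ ρ' x • Real.exp (φ x)) =ᵐ[q] fq := by
    filter_upwards [hρfin] with x hx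
    by_cases hx0 : ρ x = 0
    · have hxA : x ∉ A := by simp [hAdef, hx0]
      simp [hρ'def, hx0, hfqdef, Set.indicator_of_notMem hxA]
    · have hxA : x ∈ A := hx0
      have ht : 0 < (ρ x).toReal := ENNReal.toReal_pos hx0 hx
      have hφx : Real.exp (φ x) = Real.exp (g x) / (ρ x).toReal / L' := by
        rw [hφdef]
        simp only [llr]
        rw [sub_sub, Real.exp_sub, Real.exp_add, Real.exp_log ht, Real.exp_log hL'pos,
          div_div]
      rw [hφx, hfqdef, Set.indicator_of_mem hxA]
      have : (ρ' x : ℝ) = (ρ x).toReal := rfl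
      rw [NNReal.smul_def, smul_eq_mul, this]
      field_simp
  have hfq_int : Integrable fq q := by
    refine integrable_of_bdd ?_ (C := Real.exp C / L') fun x ↦ ?_
    · exact ((Real.measurable_exp.comp hg).div_const _).indicator hA
    · rw [hfqdef]
      by_cases hxA : x ∈ A
      · rw [Set.indicator_of_mem hxA, abs_of_nonneg (by positivity)]
        gcongr
        exact (le_abs_self _).trans (hC x)
      · rw [Set.indicator_of_notMem hxA, abs_zero]
        positivity
  have hexpφ_int : Integrable (fun x ↦ Real.exp (φ x)) p := by
    rw [← hp_eq, integrable_withDensity_iff_integrable_smul hρ'meas]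
    exact hfq_int.congr hsmul.symm
  have hexpφ_val : ∫ x, Real.exp (φ x) ∂p = 1 := by
    rw [← hp_eq, integral_withDensity_eq_integral_smul hρ'meas,
      integral_congr_ae hsmul, hfqdef, integral_indicator hA, integral_div, hL'def,
      div_self hL'pos.ne']
  have hkey : ∫ x, φ x ∂p + 1 ≤ 1 := by
    have h1 : ∫ x, (φ x + 1) ∂p ≤ ∫ x, Real.exp (φ x) ∂p :=
      integral_mono (hφint.add (integrable_const 1)) hexpφ_int fun x ↦ Real.add_one_le_exp _
    rwa [integral_add hφint (integrable_const 1), integral_const, probReal_univ, smul_eq_mul, one_mul, hexpφ_val] at h1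
  have hφval : ∫ x, φ x ∂p = ∫ x, g x ∂p - ∫ x, llr p q x ∂p - Real.log L' := by
    have e1 : ∫ x, (g x - llr p q x) ∂p = ∫ x, g x ∂p - ∫ x, llr p q x ∂p :=
      integral_sub hg_int hint
    have e2 : ∫ x, ((g x - llr p q x) - Real.log L') ∂p
        = ∫ x, (g x - llr p q x) ∂p - Real.log L' := by
      simpa using integral_sub (μ := p) (hg_int.sub hint) (integrable_const (Real.log L'))
    calc ∫ x, φ x ∂p = ∫ x, ((g x - llr p q x) - Real.log L') ∂p := rfl
      _ = ∫ x, (g x - llr p q x) ∂p - Real.log L' := e2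
      _ = ∫ x, g x ∂p - ∫ x, llr p q x ∂p - Real.log L' := by rw [e1]
  have hlog : Real.log L' ≤ Real.log (∫ x, Real.exp (g x) ∂q) :=
    Real.log_le_log hL'pos hL'le
  rw [hφval] at hkey
  linarith

/-- The converse direction: bounds on all bounded test functions give a KL bound. -/
lemma klb_of_forall (p q : Measure α) [IsProbabilityMeasure p] [IsProbabilityMeasure q]
    (hpq : p ≪ q) (K : ℝ)
    (h : ∀ g : α → ℝ, Measurable g → (∃ C, ∀ x, |g x| ≤ C) →
      ∫ x, g x ∂p ≤ K + Real.log (∫ x, Real.exp (g x) ∂q)) :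
    KLB p q K := by
  set ρ : α → ℝ≥0∞ := p.rnDeriv q with hρ
  have hρmeas : Measurable ρ := Measure.measurable_rnDeriv p q
  have hρfin : ∀ᵐ x ∂q, ρ x ≠ ∞ := Measure.rnDeriv_ne_top p q
  have hρpos : ∀ᵐ x ∂p, ρ x ≠ 0 := by
    filter_upwards [Measure.rnDeriv_pos hpq] with x hx using hx.ne'
  have hzero_meas : MeasurableSet {x | ρ x = 0} := hρmeas (measurableSet_singleton 0)
  have hllr_meas : Measurable (llr p q) := measurable_llr p q
  have htoReal_int : Integrable (fun x ↦ (ρ x).toReal) q := Measure.integrable_toReal_rnDeriv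
  have htoReal_val : ∫ x, (ρ x).toReal ∂q = 1 := by
    rw [Measure.integral_toReal_rnDeriv hpq, probReal_univ]
  have hexpllr : ∀ᵐ x ∂q, ρ x ≠ 0 → Real.exp (llr p q x) = (ρ x).toReal := by
    filter_upwards [hρfin] with x hfin h0
    exact Real.exp_log (ENNReal.toReal_pos h0 hfin)
  -- Step 1: the positive part of `llr` has bounded truncated integrals.
  have hpos_trunc : ∀ n : ℕ, ∫ x, min (max (llr p q x) 0) n ∂p ≤ K + Real.log 2 := by
    intro n
    set g : α → ℝ := fun x ↦ if ρ x = 0 then 0 else min (max (llr p q x) 0) n with hgdef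
    have hgmeas : Measurable g :=
      Measurable.ite hzero_meas measurable_const
        ((hllr_meas.max measurable_const).min measurable_const)
    have hgbd : ∀ x, |g x| ≤ n := by
      intro x
      simp only [hgdef]
      by_cases h0 : ρ x = 0
      · simp [h0]
      · rw [if_neg h0, abs_of_nonneg (le_min (le_max_right _ _) n.cast_nonneg)]
        exact min_le_right _ _
    have happ := h g hgmeas ⟨n, hgbd⟩
    have hgval : ∫ x, g x ∂p = ∫ x, min (max (llr p q x) 0) n ∂p := by
      refine integral_congr_ae ?_
      filter_upwards [hρpos] with x hx
      simp only [hgdef, if_neg hx]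
    have hB : ∫ x, Real.exp (g x) ∂q ≤ 2 := by
      have hle : ∀ᵐ x ∂q, Real.exp (g x) ≤ 1 + (ρ x).toReal := by
        filter_upwards [hexpllr] with x hx
        simp only [hgdef]
        by_cases h0 : ρ x = 0
        · simp [h0, ENNReal.toReal_nonneg]
        · rw [if_neg h0]
          have h1 : Real.exp (min (max (llr p q x) 0) n) ≤ Real.exp (max (llr p q x) 0) :=
            Real.exp_le_exp.2 (min_le_left _ _)
          have h2 : Real.exp (max (llr p q x) 0) = max (Real.exp (llr p q x)) 1 := by
            rw [Real.exp_strictMono.monotone.map_max, Real.exp_zero]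
          have h3 : max (Real.exp (llr p q x)) 1 ≤ 1 + (ρ x).toReal := by
            rw [hx h0]
            exact max_le (le_add_of_nonneg_left one_pos.le)
              (le_add_of_nonneg_right ENNReal.toReal_nonneg)
          linarith
      have hint1 : Integrable (fun x ↦ Real.exp (g x)) q := by
        refine integrable_of_bdd (Real.measurable_exp.comp hgmeas) (C := Real.exp n) fun x ↦ ?_
        rw [abs_of_nonneg (Real.exp_pos _).le]
        exact Real.exp_le_exp.2 ((le_abs_self _).trans (hgbd x))
      have h2 : ∫ x, Real.exp (g x) ∂q ≤ ∫ x, (1 + (ρ x).toReal) ∂q :=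
        integral_mono_ae hint1 ((integrable_const 1).add htoReal_int) hle
      have hsum : ∫ x, (1 + (ρ x).toReal) ∂q = 2 := by
        rw [integral_add (integrable_const 1) htoReal_int, integral_const, probReal_univ, one_smul, htoReal_val]
        norm_num
      rw [hsum] at h2
      exact h2
    have hlog2 : Real.log (∫ x, Real.exp (g x) ∂q) ≤ Real.log 2 := by
      refine Real.log_le_log ?_ hB
      have : ∀ x, Real.exp (-(n:ℝ)) ≤ Real.exp (g x) := fun x ↦
        Real.exp_le_exp.2 (by have := abs_le.1 (hgbd x); linarith [this.1])
      have h1 : (0:ℝ) < Real.exp (-(n:ℝ)) := Real.exp_pos _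
      have h2 : Real.exp (-(n:ℝ)) ≤ ∫ x, Real.exp (g x) ∂q := by
        have hint1 : Integrable (fun x ↦ Real.exp (g x)) q := by
          refine integrable_of_bdd (Real.measurable_exp.comp hgmeas) (C := Real.exp n) fun x ↦ ?_
          rw [abs_of_nonneg (Real.exp_pos _).le]
          exact Real.exp_le_exp.2 ((le_abs_self _).trans (hgbd x))
        calc Real.exp (-(n:ℝ)) = ∫ _, Real.exp (-(n:ℝ)) ∂q := by
              rw [integral_const, probReal_univ, one_smul]
          _ ≤ ∫ x, Real.exp (g x) ∂q := integral_mono (integrable_const _) hint1 this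
      linarith
    rw [hgval] at happ
    linarith
  -- Step 2: lintegral bound on the positive part.
  have hpos_lint : ∫⁻ x, ENNReal.ofReal (max (llr p q x) 0) ∂p ≤ ENNReal.ofReal (K + Real.log 2) := by
    have hptw : ∀ x, ENNReal.ofReal (max (llr p q x) 0)
        = ⨆ n : ℕ, ENNReal.ofReal (min (max (llr p q x) 0) n) := by
      intro x
      refine le_antisymm ?_ (iSup_le fun n ↦ ENNReal.ofReal_le_ofReal (min_le_left _ _))
      have hn : max (llr p q x) 0 ≤ (⌈max (llr p q x) 0⌉₊ : ℝ) := Nat.le_ceil _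
      refine le_trans (le_of_eq ?_) (le_iSup _ ⌈max (llr p q x) 0⌉₊)
      rw [min_eq_left hn]
    calc ∫⁻ x, ENNReal.ofReal (max (llr p q x) 0) ∂p
        = ∫⁻ x, ⨆ n : ℕ, ENNReal.ofReal (min (max (llr p q x) 0) n) ∂p :=
          lintegral_congr hptw
      _ = ⨆ n : ℕ, ∫⁻ x, ENNReal.ofReal (min (max (llr p q x) 0) n) ∂p := by
          refine lintegral_iSup (fun n ↦ ?_) (fun m n hmn x ↦ ?_)
          · exact ((hllr_meas.max measurable_const).min measurable_const).ennreal_ofReal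
          · exact ENNReal.ofReal_le_ofReal (min_le_min le_rfl (by exact_mod_cast hmn))
      _ ≤ ENNReal.ofReal (K + Real.log 2) := by
          refine iSup_le fun n ↦ ?_
          have hint1 : Integrable (fun x ↦ min (max (llr p q x) 0) n) p := by
            refine integrable_of_bdd ((hllr_meas.max measurable_const).min measurable_const)
              (C := n) fun x ↦ ?_
            rw [abs_of_nonneg (le_min (le_max_right _ _) n.cast_nonneg)]
            exact min_le_right _ _
          rw [← ofReal_integral_eq_lintegral_ofReal hint1
            (ae_of_all _ fun x ↦ le_min (le_max_right _ _) n.cast_nonneg)]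
          exact ENNReal.ofReal_le_ofReal (hpos_trunc n)
  -- Step 3: lintegral bound on the negative part.
  have hneg_lint : ∫⁻ x, ENNReal.ofReal (max (-llr p q x) 0) ∂p ≤ ENNReal.ofReal (Real.exp (-1)) := by
    have hmeq : ∫⁻ x, ENNReal.ofReal (max (-llr p q x) 0) ∂p
        = ∫⁻ x, (ρ * fun x ↦ ENNReal.ofReal (max (-llr p q x) 0)) x ∂q := by
      rw [← lintegral_withDensity_eq_lintegral_mul _ hρmeas
        (g := fun x ↦ ENNReal.ofReal (max (-llr p q x) 0))
        ((hllr_meas.neg.max measurable_const).ennreal_ofReal), hρ,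
        Measure.withDensity_rnDeriv_eq p q hpq]
    rw [hmeq]
    have hle : ∀ᵐ x ∂q, (ρ * fun x ↦ ENNReal.ofReal (max (-llr p q x) 0)) x
        ≤ ENNReal.ofReal (Real.exp (-1)) := by
      filter_upwards [hρfin] with x hfin
      simp only [Pi.mul_apply]
      by_cases h0 : ρ x = 0
      · simp [h0]
      · have ht : 0 < (ρ x).toReal := ENNReal.toReal_pos h0 hfin
        have hx : ρ x = ENNReal.ofReal ((ρ x).toReal) := (ENNReal.ofReal_toReal hfin).symm
        rw [hx, ← ENNReal.ofReal_mul ht.le]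
        refine ENNReal.ofReal_le_ofReal ?_
        have : llr p q x = Real.log ((ρ x).toReal) := rfl
        rw [this]
        exact aux_mul_neg_log ht
    calc ∫⁻ x, (ρ * fun x ↦ ENNReal.ofReal (max (-llr p q x) 0)) x ∂q
        ≤ ∫⁻ _, ENNReal.ofReal (Real.exp (-1)) ∂q := lintegral_mono_ae hle
      _ = ENNReal.ofReal (Real.exp (-1)) := by rw [lintegral_const, measure_univ, mul_one]
  -- Step 4: integrability of `llr`.
  have habs : ∀ x, (‖llr p q x‖₊ : ℝ≥0∞)
      = ENNReal.ofReal (max (llr p q x) 0) + ENNReal.ofReal (max (-llr p q x) 0) := by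
    intro x
    rw [← ENNReal.ofReal_add (le_max_right _ _) (le_max_right _ _)]
    rw [← enorm_eq_nnnorm, ← ofReal_norm]
    congr 1
    rcases le_total (llr p q x) 0 with hc | hc
    · rw [max_eq_right hc, max_eq_left (by linarith), Real.norm_eq_abs, abs_of_nonpos hc]
      ring
    · rw [max_eq_left hc, max_eq_right (by linarith), Real.norm_eq_abs, abs_of_nonneg hc]
      ring
  have hInt : Integrable (llr p q) p := by
    refine ⟨hllr_meas.aestronglyMeasurable, ?_⟩
    rw [hasFiniteIntegral_iff_norm]
    calc ∫⁻ x, ENNReal.ofReal ‖llr p q x‖ ∂p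
        = ∫⁻ x, (ENNReal.ofReal (max (llr p q x) 0)
            + ENNReal.ofReal (max (-llr p q x) 0)) ∂p := by
          refine lintegral_congr fun x ↦ ?_
          rw [ofReal_norm, enorm_eq_nnnorm]
          exact habs x
      _ = ∫⁻ x, ENNReal.ofReal (max (llr p q x) 0) ∂p
            + ∫⁻ x, ENNReal.ofReal (max (-llr p q x) 0) ∂p :=
          lintegral_add_left ((hllr_meas.max measurable_const).ennreal_ofReal) _
      _ < ⊤ := ENNReal.add_lt_top.2 ⟨lt_of_le_of_lt hpos_lint ENNReal.ofReal_lt_top,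
          lt_of_le_of_lt hneg_lint ENNReal.ofReal_lt_top⟩
  refine ⟨hpq, hInt, ?_⟩
  -- Step 5: conclude by truncation and passing to the limit.
  set c : ℕ → α → ℝ := fun n x ↦ max (min (llr p q x) n) (-(n:ℝ)) with hcdef
  have hcmeas : ∀ n : ℕ, Measurable (c n) :=
    fun n ↦ (hllr_meas.min measurable_const).max measurable_const
  have hcabs : ∀ (n : ℕ) x, |c n x| ≤ |llr p q x| := by
    intro n x
    rw [abs_le]
    constructor
    · refine le_max_of_le_left (le_min (neg_abs_le _) ?_)
      exact (neg_nonpos.2 (abs_nonneg _)).trans n.cast_nonneg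
    · exact max_le ((min_le_left _ _).trans (le_abs_self _))
        ((neg_nonpos.2 n.cast_nonneg).trans (abs_nonneg _))
  have hcbd : ∀ (n : ℕ) x, |c n x| ≤ n := fun n x ↦ abs_le.2
    ⟨le_max_right _ _, max_le (min_le_right _ _) (neg_le_self n.cast_nonneg)⟩
  set G : ℕ → α → ℝ := fun n x ↦ if ρ x = 0 then -(n:ℝ) else c n x with hGdef
  have hGmeas : ∀ n, Measurable (G n) :=
    fun n ↦ Measurable.ite hzero_meas measurable_const (hcmeas n)
  have hGbd : ∀ n x, |G n x| ≤ n := by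
    intro n x
    simp only [hGdef]
    by_cases h0 : ρ x = 0
    · rw [if_pos h0, abs_neg, Nat.abs_cast]
    · rw [if_neg h0]; exact hcbd n x
  have hGint : ∀ n, ∫ x, G n x ∂p = ∫ x, c n x ∂p := fun n ↦ integral_congr_ae
    (by filter_upwards [hρpos] with x hx; simp only [hGdef, if_neg hx])
  have happ : ∀ n : ℕ, ∫ x, c n x ∂p ≤ K + Real.log (Real.exp (-(n:ℝ)) + 1) := by
    intro n
    have h1 := h (G n) (hGmeas n) ⟨n, hGbd n⟩
    rw [hGint n] at h1
    have hintexp : Integrable (fun x ↦ Real.exp (G n x)) q := by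
      refine integrable_of_bdd (Real.measurable_exp.comp (hGmeas n)) (C := Real.exp n)
        fun x ↦ ?_
      rw [abs_of_nonneg (Real.exp_pos _).le]
      exact Real.exp_le_exp.2 ((le_abs_self _).trans (hGbd n x))
    have hle : ∀ᵐ x ∂q, Real.exp (G n x) ≤ Real.exp (-(n:ℝ)) + (ρ x).toReal := by
      filter_upwards [hexpllr] with x hx
      simp only [hGdef]
      by_cases h0 : ρ x = 0
      · simp [h0, ENNReal.toReal_nonneg]
      · rw [if_neg h0]
        simp only [hcdef]
        rw [Real.exp_strictMono.monotone.map_max]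
        refine max_le ?_ ?_
        · have h3 : Real.exp (min (llr p q x) n) ≤ Real.exp (llr p q x) :=
            Real.exp_le_exp.2 (min_le_left _ _)
          rw [hx h0] at h3
          linarith [Real.exp_pos (-(n:ℝ))]
        · linarith [ENNReal.toReal_nonneg (a := ρ x)]
    have h2 : ∫ x, Real.exp (G n x) ∂q ≤ ∫ x, (Real.exp (-(n:ℝ)) + (ρ x).toReal) ∂q :=
      integral_mono_ae hintexp ((integrable_const _).add htoReal_int) hle
    have hsum : ∫ x, (Real.exp (-(n:ℝ)) + (ρ x).toReal) ∂q = Real.exp (-(n:ℝ)) + 1 := by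
      rw [integral_add (integrable_const _) htoReal_int, integral_const, probReal_univ, one_smul, htoReal_val]
    rw [hsum] at h2
    have hconst : Real.exp (-(n:ℝ)) ≤ ∫ x, Real.exp (G n x) ∂q := by
      calc Real.exp (-(n:ℝ)) = ∫ _, Real.exp (-(n:ℝ)) ∂q := by
            rw [integral_const, probReal_univ, one_smul]
        _ ≤ _ := integral_mono (integrable_const _) hintexp
            (fun x ↦ Real.exp_le_exp.2 (by linarith [(abs_le.1 (hGbd n x)).1]))
    have hpos' : 0 < ∫ x, Real.exp (G n x) ∂q := lt_of_lt_of_le (Real.exp_pos _) hconst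
    have hlg := Real.log_le_log hpos' h2
    linarith
  have hlim1 : Filter.Tendsto (fun n : ℕ ↦ ∫ x, c n x ∂p) Filter.atTop
      (nhds (∫ x, llr p q x ∂p)) := by
    refine MeasureTheory.tendsto_integral_of_dominated_convergence (fun x ↦ |llr p q x|)
      (fun n ↦ (hcmeas n).aestronglyMeasurable) hInt.abs
      (fun n ↦ ae_of_all _ fun x ↦ by rw [Real.norm_eq_abs]; exact hcabs n x)
      (ae_of_all _ fun x ↦ ?_)
    have hev : ∀ᶠ n : ℕ in Filter.atTop, c n x = llr p q x := by
      filter_upwards [Filter.eventually_ge_atTop ⌈|llr p q x|⌉₊] with n hn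
      have hb : |llr p q x| ≤ (n:ℝ) := (Nat.le_ceil _).trans (by exact_mod_cast hn)
      simp only [hcdef]
      rw [min_eq_left ((le_abs_self _).trans hb),
        max_eq_left (by linarith [neg_abs_le (llr p q x), (abs_le.1 hb).1])]
    exact Filter.Tendsto.congr' (by filter_upwards [hev] with n hn using hn.symm)
      tendsto_const_nhds
  have hlim2 : Filter.Tendsto (fun n : ℕ ↦ K + Real.log (Real.exp (-(n:ℝ)) + 1))
      Filter.atTop (nhds K) := by
    have h0 : Filter.Tendsto (fun n : ℕ ↦ Real.exp (-(n:ℝ))) Filter.atTop (nhds 0) :=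
      Real.tendsto_exp_atBot.comp
        (Filter.tendsto_neg_atBot_iff.2 tendsto_natCast_atTop_atTop)
    have h1 : Filter.Tendsto (fun n : ℕ ↦ Real.exp (-(n:ℝ)) + 1) Filter.atTop (nhds 1) := by
      simpa using h0.add tendsto_const_nhds
    have h2 : Filter.Tendsto (fun n : ℕ ↦ Real.log (Real.exp (-(n:ℝ)) + 1)) Filter.atTop
        (nhds 0) := by
      have := (Real.continuousAt_log one_ne_zero).tendsto.comp h1
      simpa [Function.comp_def] using this
    simpa using tendsto_const_nhds.add h2
  exact le_of_tendsto_of_tendsto' hlim1 hlim2 happ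

lemma klb_mono {p q : Measure α} {K K' : ℝ} (h : KLB p q K) (hK : K ≤ K') : KLB p q K' :=
  ⟨h.1, h.2.1, h.2.2.trans hK⟩

lemma klb_self (p : Measure α) [SigmaFinite p] : KLB p p 0 := by
  have hllr : llr p p =ᵐ[p] 0 := by
    filter_upwards [Measure.rnDeriv_self p] with x hx
    simp [llr, hx]
  refine ⟨Measure.AbsolutelyContinuous.rfl, ?_, ?_⟩
  · exact (integrable_zero _ _ _).congr hllr.symm
  · rw [integral_congr_ae hllr]
    simp

/-- Chain rule (inequality form) for the KL divergence of composition-products. -/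
lemma klb_compProd {μ ν : Measure α} [IsProbabilityMeasure μ] [IsProbabilityMeasure ν]
    (κ η : Kernel α β) [IsMarkovKernel κ] [IsMarkovKernel η] {A B : ℝ}
    (h1 : KLB μ ν A) (h2 : ∀ a, KLB (κ a) (η a) B) :
    KLB (μ ⊗ₘ κ) (ν ⊗ₘ η) (A + B) := by
  have hac : μ ⊗ₘ κ ≪ ν ⊗ₘ η :=
    h1.1.compProd (ae_of_all _ fun a ↦ (h2 a).1)
  refine klb_of_forall _ _ hac _ ?_
  rintro g hg ⟨C, hC⟩
  have hgint : Integrable g (μ ⊗ₘ κ) := integrable_of_bdd hg hC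
  have hstep1 : ∫ z, g z ∂(μ ⊗ₘ κ) = ∫ a, ∫ b, g (a, b) ∂κ a ∂μ :=
    Measure.integral_compProd hgint
  set G : α → ℝ := fun a ↦ Real.log (∫ b, Real.exp (g (a, b)) ∂η a) with hGdef
  have hga : ∀ a, Measurable fun b ↦ g (a, b) := fun a ↦ hg.comp measurable_prodMk_left
  have hexpga_int : ∀ a, Integrable (fun b ↦ Real.exp (g (a, b))) (η a) := by
    intro a
    refine integrable_of_bdd (Real.measurable_exp.comp (hga a)) (C := Real.exp C) fun b ↦ ?_
    rw [abs_of_nonneg (Real.exp_pos _).le]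
    exact Real.exp_le_exp.2 ((le_abs_self _).trans (hC (a, b)))
  have hexpga_lb : ∀ a, Real.exp (-C) ≤ ∫ b, Real.exp (g (a, b)) ∂η a := by
    intro a
    calc Real.exp (-C) = ∫ _, Real.exp (-C) ∂η a := by
          rw [integral_const, probReal_univ, one_smul]
      _ ≤ _ := integral_mono (integrable_const _) (hexpga_int a)
          (fun b ↦ Real.exp_le_exp.2 (by linarith [(abs_le.1 (hC (a, b))).1]))
  have hexpga_ub : ∀ a, ∫ b, Real.exp (g (a, b)) ∂η a ≤ Real.exp C := by
    intro a
    calc ∫ b, Real.exp (g (a, b)) ∂η a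
        ≤ ∫ _, Real.exp C ∂η a := integral_mono (hexpga_int a) (integrable_const _)
          (fun b ↦ Real.exp_le_exp.2 ((le_abs_self _).trans (hC (a, b))))
      _ = Real.exp C := by rw [integral_const, probReal_univ, one_smul]
  have hexpga_pos : ∀ a, 0 < ∫ b, Real.exp (g (a, b)) ∂η a :=
    fun a ↦ lt_of_lt_of_le (Real.exp_pos _) (hexpga_lb a)
  have hGmeas : Measurable G := by
    have h3 : StronglyMeasurable fun a ↦ ∫ b, Real.exp (g (a, b)) ∂η a :=
      StronglyMeasurable.integral_kernel_prod_right'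
        ((Real.measurable_exp.comp hg).stronglyMeasurable)
    exact Real.measurable_log.comp h3.measurable
  have hGbd : ∀ a, |G a| ≤ C := by
    intro a
    rw [abs_le]
    constructor
    · calc -C = Real.log (Real.exp (-C)) := by rw [Real.log_exp]
        _ ≤ G a := Real.log_le_log (Real.exp_pos _) (hexpga_lb a)
    · calc G a ≤ Real.log (Real.exp C) := Real.log_le_log (hexpga_pos a) (hexpga_ub a)
        _ = C := Real.log_exp _
  set H : α → ℝ := fun a ↦ ∫ b, g (a, b) ∂κ a with hHdef
  have hHmeas : Measurable H :=
    (StronglyMeasurable.integral_kernel_prod_right' hg.stronglyMeasurable).measurable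
  have hHbd : ∀ a, |H a| ≤ C := by
    intro a
    calc |H a| ≤ ∫ b, |g (a, b)| ∂κ a := by
          simpa [Real.norm_eq_abs] using norm_integral_le_integral_norm (fun b ↦ g (a, b)) (μ := κ a)
      _ ≤ ∫ _, C ∂κ a := integral_mono (integrable_of_bdd (hga a) (fun b ↦ hC (a, b))).abs
          (integrable_const _) (fun b ↦ hC (a, b))
      _ = C := by rw [integral_const, probReal_univ, one_smul]
  have hHG : ∀ a, H a ≤ B + G a := by
    intro a
    have := integral_le_integral_llr_add_log (κ a) (η a) (h2 a).1 (h2 a).2.1 (hga a)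
      (fun b ↦ hC (a, b))
    calc H a ≤ ∫ b, llr (κ a) (η a) b ∂κ a + G a := this
      _ ≤ B + G a := by linarith [(h2 a).2.2]
  have hstep2 : ∫ a, H a ∂μ ≤ ∫ a, (B + G a) ∂μ :=
    integral_mono (integrable_of_bdd hHmeas hHbd)
      ((integrable_const B).add (integrable_of_bdd hGmeas hGbd)) hHG
  have hstep3 : ∫ a, (B + G a) ∂μ = B + ∫ a, G a ∂μ := by
    rw [integral_add (integrable_const B) (integrable_of_bdd hGmeas hGbd), integral_const,
      probReal_univ, one_smul]
  have hstep4 : ∫ a, G a ∂μ ≤ A + Real.log (∫ a, Real.exp (G a) ∂ν) := by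
    have := integral_le_integral_llr_add_log μ ν h1.1 h1.2.1 hGmeas hGbd
    linarith [h1.2.2]
  have hstep5 : ∫ a, Real.exp (G a) ∂ν = ∫ z, Real.exp (g z) ∂(ν ⊗ₘ η) := by
    have hint : Integrable (fun z ↦ Real.exp (g z)) (ν ⊗ₘ η) := by
      refine integrable_of_bdd (Real.measurable_exp.comp hg) (C := Real.exp C) fun z ↦ ?_
      rw [abs_of_nonneg (Real.exp_pos _).le]
      exact Real.exp_le_exp.2 ((le_abs_self _).trans (hC z))
    rw [Measure.integral_compProd hint]
    exact integral_congr_ae (ae_of_all _ fun a ↦ Real.exp_log (hexpga_pos a))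
  rw [hstep1]
  calc ∫ a, H a ∂μ ≤ B + ∫ a, G a ∂μ := by rw [← hstep3]; exact hstep2
    _ ≤ B + (A + Real.log (∫ a, Real.exp (G a) ∂ν)) := by linarith
    _ = A + B + Real.log (∫ z, Real.exp (g z) ∂(ν ⊗ₘ η)) := by rw [hstep5]; ring

lemma klb_prod {p₁ q₁ : Measure α} {p₂ q₂ : Measure β}
    [IsProbabilityMeasure p₁] [IsProbabilityMeasure q₁]
    [IsProbabilityMeasure p₂] [IsProbabilityMeasure q₂] {A B : ℝ}
    (h1 : KLB p₁ q₁ A) (h2 : KLB p₂ q₂ B) :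
    KLB (p₁.prod p₂) (q₁.prod q₂) (A + B) := by
  rw [← Measure.compProd_const, ← Measure.compProd_const]
  exact klb_compProd _ _ h1 fun a ↦ by simpa [Kernel.const_apply] using h2

lemma integrable_id_gaussianReal (m : ℝ) (v : ℝ≥0) :
    Integrable (fun x : ℝ ↦ x) (gaussianReal m v) := by
  by_cases hv : v = 0
  · rw [hv, gaussianReal_zero_var]
    refine (integrable_const m).congr ?_
    rw [MeasureTheory.ae_dirac_eq]
    exact Filter.eventually_pure.2 rfl
  · rw [gaussianReal_of_var_ne_zero m hv, gaussianPDF_def,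
      integrable_withDensity_iff (measurable_gaussianPDFReal m v).ennreal_ofReal
        (ae_of_all _ fun x ↦ ENNReal.ofReal_lt_top)]
    have hcongr : ∀ x : ℝ, x * (ENNReal.ofReal (gaussianPDFReal m v x)).toReal
        = x * gaussianPDFReal m v x := by
      intro x
      rw [ENNReal.toReal_ofReal (gaussianPDFReal_nonneg m v x)]
    refine Integrable.congr ?_ (ae_of_all _ fun x ↦ (hcongr x).symm)
    unfold gaussianPDFReal
    have hb : (0:ℝ) < (2 * (v:ℝ))⁻¹ := by positivity
    have h1 : Integrable (fun x : ℝ ↦ (x + m) * Real.exp (-(2 * (v:ℝ))⁻¹ * x ^ 2)) := by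
      have h2 := integrable_mul_exp_neg_mul_sq hb
      have h3 : Integrable (fun x : ℝ ↦ m * Real.exp (-(2 * (v:ℝ))⁻¹ * x ^ 2)) :=
        (integrable_exp_neg_mul_sq hb).const_mul m
      have h4 : (fun x : ℝ ↦ (x + m) * Real.exp (-(2 * (v:ℝ))⁻¹ * x ^ 2))
          = fun x : ℝ ↦ x * Real.exp (-(2 * (v:ℝ))⁻¹ * x ^ 2)
            + m * Real.exp (-(2 * (v:ℝ))⁻¹ * x ^ 2) := by
        funext x; ring
      rw [h4]
      exact h2.add h3
    have h4 : Integrable (fun x : ℝ ↦ ((x + m) * Real.exp (-(2 * (v:ℝ))⁻¹ * x ^ 2))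
        * (Real.sqrt (2 * Real.pi * v))⁻¹) := h1.mul_const _
    have h5 := h4.comp_sub_right m
    refine h5.congr (ae_of_all _ fun x ↦ ?_)
    beta_reduce
    have : -(2 * (v:ℝ))⁻¹ * (x - m) ^ 2 = -(x - m) ^ 2 / (2 * v) := by ring
    rw [this]
    ring

lemma integral_id_gaussianReal (m : ℝ) (v : ℝ≥0) :
    ∫ x, x ∂(gaussianReal m v) = m := by
  have hmap : (gaussianReal 0 v).map (· + m) = gaussianReal m v := by
    simpa using gaussianReal_map_add_const (μ := 0) (v := v) m
  have hzero : ∫ x, x ∂(gaussianReal 0 v) = 0 := by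
    have hneg : (gaussianReal 0 v).map (fun x ↦ -x) = gaussianReal 0 v := by
      have := gaussianReal_map_const_mul (μ := 0) (v := v) (-1)
      have hv : (⟨(-1:ℝ)^2, sq_nonneg _⟩ * v : ℝ≥0) = v := by
        apply NNReal.eq
        change (-1:ℝ) ^ 2 * (v:ℝ) = v
        norm_num
      simp only [neg_one_mul, mul_zero] at this
      rw [this]
      exact congrArg _ hv
    have h2 : ∫ x, x ∂((gaussianReal 0 v).map (fun x : ℝ ↦ -x))
        = ∫ x, -x ∂(gaussianReal 0 v) :=
      integral_map measurable_neg.aemeasurable measurable_id.aestronglyMeasurable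
    rw [hneg, integral_neg] at h2
    linarith
  have h6 : ∫ x, x ∂(gaussianReal m v) = ∫ x, (x + m) ∂(gaussianReal 0 v) := by
    rw [← hmap]
    exact integral_map (measurable_id.add_const m).aemeasurable
      measurable_id.aestronglyMeasurable
  rw [h6, integral_add (integrable_id_gaussianReal 0 v) (integrable_const m), hzero,
    integral_const, probReal_univ, one_smul, zero_add]

lemma klb_gaussianReal (m₁ m₂ : ℝ) {v : ℝ≥0} (hv : v ≠ 0) :
    KLB (gaussianReal m₁ v) (gaussianReal m₂ v) ((m₁ - m₂) ^ 2 / (2 * v)) := by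
  set p := gaussianReal m₁ v with hpdef
  set q := gaussianReal m₂ v with hqdef
  have hpvol : p ≪ (volume : Measure ℝ) := gaussianReal_absolutelyContinuous m₁ hv
  have hqvol : q ≪ (volume : Measure ℝ) := gaussianReal_absolutelyContinuous m₂ hv
  have hvolq : (volume : Measure ℝ) ≪ q := gaussianReal_absolutelyContinuous' m₂ hv
  have hac : p ≪ q := hpvol.trans hvolq
  -- identify the llr
  have hrn : p.rnDeriv q =ᵐ[q] fun x ↦ gaussianPDF m₁ v x * (gaussianPDF m₂ v x)⁻¹ := by
    have h1 : p.rnDeriv volume * (volume : Measure ℝ).rnDeriv q =ᵐ[q] p.rnDeriv q :=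
      Measure.rnDeriv_mul_rnDeriv hpvol
    have h2 : (volume : Measure ℝ).rnDeriv q =ᵐ[q] fun x ↦ (gaussianPDF m₂ v x)⁻¹ := by
      have h3 : (q.rnDeriv volume)⁻¹ =ᵐ[q] (volume : Measure ℝ).rnDeriv q :=
        Measure.inv_rnDeriv hqvol
      have h4 : q.rnDeriv volume =ᵐ[q] gaussianPDF m₂ v :=
        hqvol.ae_le (rnDeriv_gaussianReal m₂ v)
      filter_upwards [h3, h4] with x hx3 hx4
      rw [← hx3, Pi.inv_apply, hx4]
    have h5 : p.rnDeriv volume =ᵐ[q] gaussianPDF m₁ v :=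
      hqvol.ae_le (rnDeriv_gaussianReal m₁ v)
    filter_upwards [h1, h2, h5] with x hx1 hx2 hx5
    rw [← hx1, Pi.mul_apply, hx2, hx5]
  have hllr : llr p q =ᵐ[p] fun x ↦ ((x - m₂) ^ 2 - (x - m₁) ^ 2) / (2 * v) := by
    have hrn' : p.rnDeriv q =ᵐ[p] fun x ↦ gaussianPDF m₁ v x * (gaussianPDF m₂ v x)⁻¹ :=
      hac.ae_le hrn
    filter_upwards [hrn'] with x hx
    simp only [llr, hx]
    have h1 : 0 < gaussianPDFReal m₁ v x := gaussianPDFReal_pos _ _ _ hv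
    have h2 : 0 < gaussianPDFReal m₂ v x := gaussianPDFReal_pos _ _ _ hv
    rw [gaussianPDF_def, gaussianPDF_def]
    simp only []
    rw [← ENNReal.ofReal_inv_of_pos h2, ← ENNReal.ofReal_mul h1.le,
      ENNReal.toReal_ofReal (by positivity)]
    rw [Real.log_mul h1.ne' (by positivity), Real.log_inv]
    unfold gaussianPDFReal
    have hs : (0:ℝ) < Real.sqrt (2 * Real.pi * v) := by
      refine Real.sqrt_pos.2 ?_
      have : (0:ℝ) < (v:ℝ) := by positivity
      positivity
    rw [Real.log_mul (by positivity) (Real.exp_ne_zero _),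
      Real.log_mul (by positivity) (Real.exp_ne_zero _), Real.log_exp, Real.log_exp]
    ring
  have hvpos : (0:ℝ) < (v:ℝ) := by positivity
  have hlin : (fun x : ℝ ↦ ((x - m₂) ^ 2 - (x - m₁) ^ 2) / (2 * v))
      = fun x : ℝ ↦ ((m₁ - m₂) / v) * x + (m₂ ^ 2 - m₁ ^ 2) / (2 * v) := by
    funext x
    field_simp
    ring
  have hlin_int : Integrable (fun x : ℝ ↦ ((x - m₂) ^ 2 - (x - m₁) ^ 2) / (2 * v)) p := by
    rw [hlin]
    exact (((integrable_id_gaussianReal m₁ v).const_mul _).add (integrable_const _))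
  refine ⟨hac, hlin_int.congr hllr.symm, ?_⟩
  rw [integral_congr_ae hllr, hlin]
  rw [integral_add ((integrable_id_gaussianReal m₁ v).const_mul _) (integrable_const _),
    integral_const, probReal_univ, one_smul,
    integral_const_mul, integral_id_gaussianReal]
  have : (m₁ - m₂) / (v:ℝ) * m₁ + (m₂ ^ 2 - m₁ ^ 2) / (2 * v) = (m₁ - m₂) ^ 2 / (2 * v) := by
    field_simp
    ring
  rw [this]

end KLProof


/-- Joint robustness to dynamics and cost perturbations (Steps 1–2 of Theorem 1): if each
dynamics kernel lies within KL radius `η_k` of its nominal model and each stage cost is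
perturbed by at most `Δ_k` and fed through a Gaussian running-cost channel of variance `σ²`,
then the augmented path measures over horizon `N` satisfy
`D_KL(true path ‖ nominal path) ≤ ∑_{k=1}^N (η_k + Δ_k²/(2σ²))`. -/
theorem klDiv_augmented_path_measure_le {X : ℕ → Type} [∀ k, MeasurableSpace (X k)]
    (N : ℕ) (hN : 1 ≤ N) (σ : ℝ) (hσ : 0 < σ)
    (μ : Measure (X 0)) [IsProbabilityMeasure μ]
    (κ κbar : ∀ k, ProbabilityTheory.Kernel (AugPathSpace X k) (X (k + 1)))
    [∀ k, ProbabilityTheory.IsMarkovKernel (κ k)]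
    [∀ k, ProbabilityTheory.IsMarkovKernel (κbar k)]
    (η Δ : ℕ → ℝ)
    (hκ : ∀ k, ∀ h, klDiv (κ k h) (κbar k h) ≤ ((η (k + 1) : ℝ) : EReal))
    (ℓ δc : ∀ k, AugPathSpace X k → ℝ)
    (hℓ : ∀ k, Measurable (ℓ k)) (hδc : ∀ k, Measurable (δc k))
    (hδ : ∀ k, ∀ h, |δc k h| ≤ Δ (k + 1))
    (κaug κbaraug : ∀ k, ProbabilityTheory.Kernel (AugPathSpace X k) (X (k + 1) × ℝ))
    [∀ k, ProbabilityTheory.IsMarkovKernel (κaug k)]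
    [∀ k, ProbabilityTheory.IsMarkovKernel (κbaraug k)]
    (hκaug : ∀ k, ∀ h, κaug k h
      = (κ k h).prod (gaussianReal (ℓ k h + δc k h) (σ ^ 2).toNNReal))
    (hκbaraug : ∀ k, ∀ h, κbaraug k h
      = (κbar k h).prod (gaussianReal (ℓ k h) (σ ^ 2).toNNReal)) :
    klDiv (augPathMeasure μ κaug N) (augPathMeasure μ κbaraug N)
      ≤ ((∑ k ∈ Finset.Icc 1 N, (η k + (Δ k) ^ 2 / (2 * σ ^ 2)) : ℝ) : EReal) := by
  classical
  have hv0 : (σ ^ 2).toNNReal ≠ 0 := by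
    simp only [ne_eq, Real.toNNReal_eq_zero, not_le]
    positivity
  have hvr : (((σ ^ 2).toNNReal : ℝ≥0) : ℝ) = σ ^ 2 := Real.coe_toNNReal _ (by positivity)
  have hκ' : ∀ k h, KLProof.KLB (κ k h) (κbar k h) (η (k + 1)) := by
    intro k h
    have hle := hκ k h
    rw [klDiv] at hle
    split_ifs at hle with hc
    · exact ⟨hc.1, hc.2, by exact_mod_cast hle⟩
    · exact absurd hle (by simp)
  have hstep : ∀ k h, KLProof.KLB (κaug k h) (κbaraug k h)
      (η (k + 1) + Δ (k + 1) ^ 2 / (2 * σ ^ 2)) := by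
    intro k h
    rw [hκaug k h, hκbaraug k h]
    refine KLProof.klb_mono (KLProof.klb_prod (hκ' k h) (KLProof.klb_gaussianReal _ _ hv0)) ?_
    rw [hvr]
    refine add_le_add le_rfl ?_
    have h1 : (ℓ k h + δc k h - ℓ k h) ^ 2 ≤ Δ (k + 1) ^ 2 := by
      have h2 := hδ k h
      have h3 : ℓ k h + δc k h - ℓ k h = δc k h := by ring
      rw [h3, ← sq_abs]
      have h4 : (0:ℝ) ≤ |δc k h| := abs_nonneg _
      nlinarith
    gcongr
  have hPM : ∀ (κ' : ∀ k, ProbabilityTheory.Kernel (AugPathSpace X k) (X (k + 1) × ℝ))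
      (_ : ∀ k, ProbabilityTheory.IsMarkovKernel (κ' k)) (k : ℕ),
      IsProbabilityMeasure (augPathMeasure μ κ' k) := by
    intro κ' hmk k
    induction k with
    | zero => exact ‹IsProbabilityMeasure μ›
    | succ k ih =>
      haveI := ih
      haveI := hmk k
      have h : IsProbabilityMeasure ((augPathMeasure μ κ' k) ⊗ₘ (κ' k)) := by infer_instance
      exact h
  have main : ∀ k, KLProof.KLB (augPathMeasure μ κaug k) (augPathMeasure μ κbaraug k)
      (∑ j ∈ Finset.Icc 1 k, (η j + Δ j ^ 2 / (2 * σ ^ 2))) := by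
    intro k
    induction k with
    | zero =>
      have h0 : (∑ j ∈ Finset.Icc 1 0, (η j + Δ j ^ 2 / (2 * σ ^ 2))) = 0 := by
        rw [show Finset.Icc 1 0 = ∅ from rfl]
        simp
      rw [h0]
      exact KLProof.klb_self μ
    | succ k ih =>
      haveI := hPM κaug (fun k ↦ inferInstance) k
      haveI := hPM κbaraug (fun k ↦ inferInstance) k
      have hcp := KLProof.klb_compProd (κaug k) (κbaraug k) ih (fun h ↦ hstep k h)
      rw [show augPathMeasure μ κaug (k + 1) = (augPathMeasure μ κaug k) ⊗ₘ (κaug k) from rfl,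
        show augPathMeasure μ κbaraug (k + 1) = (augPathMeasure μ κbaraug k) ⊗ₘ (κbaraug k)
          from rfl]
      refine KLProof.klb_mono hcp (le_of_eq ?_)
      rw [Finset.sum_Icc_succ_top (Nat.succ_le_succ (Nat.zero_le k))]
  haveI := hPM κaug (fun k ↦ inferInstance) N
  haveI := hPM κbaraug (fun k ↦ inferInstance) N
  obtain ⟨h1, h2, h3⟩ := main N
  rw [klDiv]
  split_ifs with hc
  · exact_mod_cast h3
  · exact absurd ⟨h1, h2⟩ hc
end
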